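/- arXiv:1604.06934 — 9 statements merged into one kernel-verified Lean document; each statement's English description precedes it below -/
import Mathlib

section
/- For n complex numbers ζ₁,…,ζₙ on the unit circle, none equal to 1, with xᵢ = τ(ζᵢ) = i(1+ζᵢ)/(1-ζᵢ) ∈ ℝ, the Vandermonde determinants satisfy |Δ(ζ₁,…,ζₙ)| = 2^{n(n-1)/2} |Δ(x₁,…,xₙ)| ∏ᵢ (1+xᵢ²)^{-(n-1)/2}. -/
open Finset

theorem vandermonde_cayley (n : ℕ) (ζ : Fin n → ℂ) (x : Fin n → ℝ)
    (hmod : ∀ i, ‖ζ i‖ = 1) (hne : ∀ i, ζ i ≠ 1)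
    (hx : ∀ i, ((x i : ℝ) : ℂ) = Complex.I * (1 + ζ i) / (1 - ζ i)) :
    ‖∏ i, ∏ j ∈ Finset.Ioi i, (ζ j - ζ i)‖
      = 2 ^ (n * (n - 1) / 2) * |∏ i, ∏ j ∈ Finset.Ioi i, (x j - x i)|
        * ∏ i, (1 + x i ^ 2) ^ (-((n : ℝ) - 1) / 2) := by
  rcases Nat.eq_zero_or_pos n with hn | hn
  · subst hn; simp
  -- basic facts
  have hA : ∀ i, ((x i : ℂ) + Complex.I) ≠ 0 := by
    intro i h
    have := congrArg Complex.im h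
    simp at this
  have hB : ∀ i, ζ i * ((x i : ℂ) + Complex.I) = (x i : ℂ) - Complex.I := by
    intro i
    have h1 : (1 : ℂ) - ζ i ≠ 0 := sub_ne_zero.mpr (Ne.symm (hne i))
    have h2 : ((x i : ℝ) : ℂ) * (1 - ζ i) = Complex.I * (1 + ζ i) := by
      rw [hx i, div_mul_cancel₀ _ h1]
    linear_combination -h2
  have hC : ∀ i j, ζ j - ζ i
      = 2 * Complex.I * ((x j : ℂ) - (x i : ℂ)) / (((x j : ℂ) + Complex.I) * ((x i : ℂ) + Complex.I)) := by
    intro i j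
    rw [eq_div_iff (mul_ne_zero (hA j) (hA i))]
    linear_combination ((x i : ℂ) + Complex.I) * hB j - ((x j : ℂ) + Complex.I) * hB i
  set s : Fin n → ℝ := fun i => ‖(x i : ℂ) + Complex.I‖ with hs
  have hspos : ∀ i, 0 < s i := fun i => norm_pos_iff.mpr (hA i)
  have hssq : ∀ i, s i ^ 2 = 1 + x i ^ 2 := by
    intro i
    rw [hs]
    rw [Complex.sq_norm, Complex.normSq_apply]
    simp
    ring
  have habs : ∀ i j, ‖ζ j - ζ i‖ = 2 * |x j - x i| * ((s j)⁻¹ * (s i)⁻¹) := by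
    intro i j
    rw [hC i j]
    rw [norm_div, norm_mul, norm_mul, norm_mul]
    have : ((x j : ℂ) - (x i : ℂ)) = ((x j - x i : ℝ) : ℂ) := by push_cast; ring
    rw [this, Complex.norm_real, Real.norm_eq_abs, Complex.norm_I, Complex.norm_two]
    field_simp
    rfl
  -- rewrite LHS
  rw [norm_prod]
  simp_rw [norm_prod, habs]
  rw [abs_prod]
  simp_rw [abs_prod, Finset.prod_mul_distrib]
  -- three products
  have h2 : (∏ i : Fin n, ∏ j ∈ Ioi i, (2:ℝ)) = 2 ^ (n * (n-1) / 2) := by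
    simp_rw [Finset.prod_const]
    rw [Finset.prod_pow_eq_pow_sum]
    congr 1
    simp_rw [Fin.card_Ioi]
    rw [Fin.sum_univ_eq_sum_range]
    rw [← Finset.sum_range_reflect]
    simp only [Nat.sub_sub]
    rw [← Finset.sum_range_id n]
    apply Finset.sum_congr rfl
    intro i hi
    simp at hi
    omega
  have hsw : (∏ i : Fin n, ∏ j ∈ Ioi i, (s j)⁻¹) * (∏ i : Fin n, ∏ j ∈ Ioi i, (s i)⁻¹)
      = ∏ i : Fin n, (1 + x i ^ 2) ^ (-((n : ℝ) - 1) / 2) := by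
    have e2 : (∏ i : Fin n, ∏ j ∈ Ioi i, (s j)⁻¹)
        = ∏ j : Fin n, ∏ i ∈ Iio j, (s j)⁻¹ := by
      apply Finset.prod_comm'
      intro i j
      simp [Finset.mem_Ioi, Finset.mem_Iio]
    rw [e2]
    simp_rw [Finset.prod_const, Fin.card_Iio, Fin.card_Ioi]
    rw [← Finset.prod_mul_distrib]
    apply Finset.prod_congr rfl
    intro i _
    rw [← pow_add]
    have hcard : (i : ℕ) + (n - 1 - (i:ℕ)) = n - 1 := by omega
    rw [hcard]
    rw [← hssq i]
    rw [inv_pow, ← Real.rpow_natCast (s i) (n-1), ← Real.rpow_neg (hspos i).le,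
        ← Real.rpow_natCast (s i) 2, ← Real.rpow_mul (hspos i).le]
    congr 1
    push_cast [Nat.cast_sub (by omega : 1 ≤ n)]
    ring
  rw [h2, hsw]
end

section
/- For real a with |a| < 1, the integral (1/2π)∫₀^{2π} (1 - a·cos θ)·log(1 - a·cos θ) dθ equals 1 - √(1-a²) + log((1 + √(1-a²))/2). -/
open Real

lemma gw_pos (b : ℝ) (hb : |b| < 1) (t : ℝ) : 0 < 1 - b * Real.cos t := by
  have h1 : |b * Real.cos t| ≤ |b| := by
    rw [abs_mul]
    nlinarith [abs_nonneg b, Real.abs_cos_le_one t, abs_nonneg (Real.cos t)]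
  have := abs_le.mp h1
  linarith

lemma gw_hasDerivAt_g (b : ℝ) (hb : |b| < 1) (θ : ℝ) :
    HasDerivAt (fun t => (t + 2 * Real.arctan (b * Real.sin t /
        (1 + Real.sqrt (1 - b ^ 2) - b * Real.cos t))) / Real.sqrt (1 - b ^ 2))
      (1 / (1 - b * Real.cos θ)) θ := by
  have hb2 : 0 < 1 - b ^ 2 := by nlinarith [sq_abs b, abs_nonneg b]
  set s := Real.sqrt (1 - b ^ 2) with hsdef
  have hs : 0 < s := Real.sqrt_pos.mpr hb2
  have hs2 : s ^ 2 = 1 - b ^ 2 := Real.sq_sqrt hb2.le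
  have hpos := gw_pos b hb θ
  have hD : 0 < 1 + s - b * Real.cos θ := by linarith
  have hnum : HasDerivAt (fun t => b * Real.sin t) (b * Real.cos θ) θ :=
    (Real.hasDerivAt_sin θ).const_mul b
  have hden : HasDerivAt (fun t => 1 + s - b * Real.cos t) (b * Real.sin θ) θ := by
    have := ((Real.hasDerivAt_cos θ).const_mul b).const_sub (1 + s)
    refine this.congr_deriv ?_
    ring
  have hu := hnum.div hden hD.ne'
  have harc := (Real.hasDerivAt_arctan
      (b * Real.sin θ / (1 + s - b * Real.cos θ))).comp θ hu
  have hfull := ((hasDerivAt_id θ).add (harc.const_mul 2)).div_const s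
  refine hfull.congr_deriv ?_
  have hsin := Real.sin_sq_add_cos_sq θ
  have key : (1 + s - b * Real.cos θ) ^ 2 + (b * Real.sin θ) ^ 2
      = 2 * (1 + s) * (1 - b * Real.cos θ) := by nlinarith

  have hD' := hD.ne'
  have hp' := hpos.ne'
  field_simp
  linear_combination (-(1 + s - b * Real.cos θ)) * hs2 + (-(1 + s - b * Real.cos θ) * b ^ 2) * hsin

lemma gw_hasDerivAt_Phi (b : ℝ) (hb : |b| < 1) (hb0 : b ≠ 0) (θ : ℝ) :
    HasDerivAt (fun t => Real.sin t * Real.log (1 - b * Real.cos t)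
        + ((1 - b ^ 2) / b) * ((t + 2 * Real.arctan (b * Real.sin t /
            (1 + Real.sqrt (1 - b ^ 2) - b * Real.cos t))) / Real.sqrt (1 - b ^ 2))
        - t / b)
      (Real.cos θ * (Real.log (1 - b * Real.cos θ) + 1)) θ := by
  have hpos := gw_pos b hb θ
  have h1 : HasDerivAt (fun t => 1 - b * Real.cos t) (b * Real.sin θ) θ := by
    have := ((Real.hasDerivAt_cos θ).const_mul b).const_sub 1
    refine this.congr_deriv ?_; ring
  have hlog : HasDerivAt (fun t => Real.log (1 - b * Real.cos t))
      (b * Real.sin θ / (1 - b * Real.cos θ)) θ := h1.log hpos.ne'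
  have hterm1 := (Real.hasDerivAt_sin θ).mul hlog
  have hterm2 := (gw_hasDerivAt_g b hb θ).const_mul ((1 - b ^ 2) / b)
  have hterm3 : HasDerivAt (fun t : ℝ => t / b) (1 / b) θ := (hasDerivAt_id θ).div_const b
  have := (hterm1.add hterm2).sub hterm3
  refine this.congr_deriv ?_
  have hsin := Real.sin_sq_add_cos_sq θ
  have hp' : 1 - Real.cos θ * b ≠ 0 := by rw [mul_comm]; exact hpos.ne'
  field_simp
  linear_combination b ^ 2 * hsin

lemma gw_cont (b : ℝ) (hb : |b| < 1) :
    Continuous (fun t => Real.cos t * (Real.log (1 - b * Real.cos t) + 1)) := by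
  apply Real.continuous_cos.mul
  apply Continuous.add _ continuous_const
  exact Real.continuous_log.comp ((continuous_const.sub
    (continuous_const.mul Real.continuous_cos)).subtype_mk
    (fun t => (gw_pos b hb t).ne')) |>.congr (fun t => rfl)

lemma gw_integral_deriv (b : ℝ) (hb : |b| < 1) (hb0 : b ≠ 0) :
    ∫ θ in (0:ℝ)..(2 * Real.pi), Real.cos θ * (Real.log (1 - b * Real.cos θ) + 1)
      = 2 * Real.pi * (Real.sqrt (1 - b ^ 2) - 1) / b := by
  have hb2 : 0 < 1 - b ^ 2 := by nlinarith [sq_abs b, abs_nonneg b]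
  have hs : 0 < Real.sqrt (1 - b ^ 2) := Real.sqrt_pos.mpr hb2
  have hs2 : Real.sqrt (1 - b ^ 2) ^ 2 = 1 - b ^ 2 := Real.sq_sqrt hb2.le
  rw [intervalIntegral.integral_eq_sub_of_hasDerivAt
    (fun t _ => gw_hasDerivAt_Phi b hb hb0 t) ((gw_cont b hb).intervalIntegrable 0 (2 * Real.pi))]
  simp [Real.sin_two_pi, Real.cos_two_pi, Real.sin_zero, Real.cos_zero]
  field_simp
  ring_nf
  linear_combination (-1 : ℝ) * hs2

lemma gw_cont2 (x : ℝ) (hx : |x| < 1) :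
    Continuous (fun t => (1 - x * Real.cos t) * Real.log (1 - x * Real.cos t)) := by
  apply (continuous_const.sub (continuous_const.mul Real.continuous_cos)).mul
  exact Real.continuous_log.comp ((continuous_const.sub
    (continuous_const.mul Real.continuous_cos)).subtype_mk
    (fun t => (gw_pos x hx t).ne')) |>.congr (fun t => rfl)

lemma gw_hasDerivAt_F (b : ℝ) (hb : |b| < 1) :
    HasDerivAt (fun x => ∫ θ in (0:ℝ)..(2 * Real.pi),
        (1 - x * Real.cos θ) * Real.log (1 - x * Real.cos θ))
      (∫ θ in (0:ℝ)..(2 * Real.pi), -(Real.cos θ * (Real.log (1 - b * Real.cos θ) + 1))) b := by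
  set c : ℝ := (1 + |b|) / 2 with hc
  have hc1 : c < 1 := by simp only [hc]; linarith
  have hc0 : 0 < 1 - c := by linarith
  have hε : (0:ℝ) < (1 - |b|) / 2 := by linarith
  have hball : ∀ x ∈ Metric.ball b ((1 - |b|) / 2), |x| < c := by
    intro x hx
    rw [Metric.mem_ball, Real.dist_eq] at hx
    have := abs_sub_abs_le_abs_sub x b
    simp only [hc]; linarith
  have key := intervalIntegral.hasDerivAt_integral_of_dominated_loc_of_deriv_le
    (F := fun x θ => (1 - x * Real.cos θ) * Real.log (1 - x * Real.cos θ))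
    (F' := fun x θ => -(Real.cos θ * (Real.log (1 - x * Real.cos θ) + 1)))
    (x₀ := b) (a := 0) (b := 2 * Real.pi) (μ := MeasureTheory.volume)
    (bound := fun _ => |Real.log (1 - c)| + Real.log 2 + 1) (Metric.ball_mem_nhds b hε)
    ?_ ?_ ?_ ?_ ?_ ?_
  · exact key.2
  · filter_upwards [Metric.ball_mem_nhds b hε] with x hx
    exact ((gw_cont2 x ((hball x hx).trans hc1)).aestronglyMeasurable)
  · exact (gw_cont2 b hb).intervalIntegrable 0 (2 * Real.pi)
  · exact ((gw_cont b hb).neg.aestronglyMeasurable)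
  · refine MeasureTheory.ae_of_all _ (fun t _ x hx => ?_)
    have hxc : |x| < c := hball x hx
    have hx1 : |x| < 1 := hxc.trans hc1
    have hlow : 1 - c ≤ 1 - x * Real.cos t := by
      have : |x * Real.cos t| ≤ c := by
        rw [abs_mul]
        nlinarith [Real.abs_cos_le_one t, abs_nonneg x, abs_nonneg (Real.cos t)]
      have := abs_le.mp this
      linarith
    have hhigh : 1 - x * Real.cos t ≤ 2 := by
      have : |x * Real.cos t| ≤ c := by
        rw [abs_mul]
        nlinarith [Real.abs_cos_le_one t, abs_nonneg x, abs_nonneg (Real.cos t)]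
      have := abs_le.mp this
      linarith
    have hL1 : Real.log (1 - x * Real.cos t) ≤ Real.log 2 :=
      Real.log_le_log (by linarith) hhigh
    have hL2 : Real.log (1 - c) ≤ Real.log (1 - x * Real.cos t) :=
      Real.log_le_log hc0 hlow
    have hlog2 : (0:ℝ) ≤ Real.log 2 := Real.log_nonneg (by norm_num)
    have habs : |Real.log (1 - x * Real.cos t)| ≤ |Real.log (1 - c)| + Real.log 2 := by
      rw [abs_le]
      constructor
      · have := neg_abs_le (Real.log (1 - c)); linarith
      · have h0 := abs_nonneg (Real.log (1 - c)); linarith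
    rw [Real.norm_eq_abs, abs_neg, abs_mul]
    show |Real.cos t| * |Real.log (1 - x * Real.cos t) + 1|
      ≤ |Real.log (1 - c)| + Real.log 2 + 1
    have h1 : |Real.log (1 - x * Real.cos t) + 1| ≤ |Real.log (1 - c)| + Real.log 2 + 1 := by
      have := abs_add_le (Real.log (1 - x * Real.cos t)) 1
      simp at this
      linarith
    nlinarith [Real.abs_cos_le_one t, abs_nonneg (Real.log (1 - x * Real.cos t) + 1),
      abs_nonneg (Real.cos t)]
  · exact intervalIntegrable_const
  · refine MeasureTheory.ae_of_all _ (fun t _ x hx => ?_)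
    have hx1 : |x| < 1 := (hball x hx).trans hc1
    have hpos := gw_pos x hx1 t
    have h1 : HasDerivAt (fun y => 1 - y * Real.cos t) (-Real.cos t) x := by
      have := ((hasDerivAt_id x).mul_const (Real.cos t)).const_sub 1
      refine this.congr_deriv ?_; ring
    have hlog : HasDerivAt (fun y => Real.log (1 - y * Real.cos t))
        (-Real.cos t / (1 - x * Real.cos t)) x := h1.log hpos.ne'
    have := h1.mul hlog
    refine this.congr_deriv ?_
    have hp' : 1 - Real.cos t * x ≠ 0 := by rw [mul_comm]; exact hpos.ne'
    field_simp
    ring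

lemma gw_hasDerivAt_R (x : ℝ) (hx : |x| < 1) :
    HasDerivAt (fun y => 2 * Real.pi *
        (1 - Real.sqrt (1 - y ^ 2) + Real.log ((1 + Real.sqrt (1 - y ^ 2)) / 2)))
      (2 * Real.pi * x / (1 + Real.sqrt (1 - x ^ 2))) x := by
  have h2 : 0 < 1 - x ^ 2 := by nlinarith [sq_abs x, abs_nonneg x]
  have hs : 0 < Real.sqrt (1 - x ^ 2) := Real.sqrt_pos.mpr h2
  have hs2 : Real.sqrt (1 - x ^ 2) ^ 2 = 1 - x ^ 2 := Real.sq_sqrt h2.le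
  have hsq : HasDerivAt (fun y : ℝ => 1 - y ^ 2) (-(2 * x)) x := by
    have := ((hasDerivAt_pow 2 x).const_sub 1)
    refine this.congr_deriv ?_
    simp
  have hsqrt : HasDerivAt (fun y : ℝ => Real.sqrt (1 - y ^ 2))
      (1 / (2 * Real.sqrt (1 - x ^ 2)) * -(2 * x)) x :=
    (Real.hasDerivAt_sqrt h2.ne').comp x hsq
  have hinner : HasDerivAt (fun y : ℝ => (1 + Real.sqrt (1 - y ^ 2)) / 2)
      ((1 / (2 * Real.sqrt (1 - x ^ 2)) * -(2 * x)) / 2) x :=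
    (hsqrt.const_add 1).div_const 2
  have hlog := hinner.log (by positivity : (1 + Real.sqrt (1 - x ^ 2)) / 2 ≠ 0)
  have := (((hsqrt.const_sub 1).add hlog).const_mul (2 * Real.pi))
  refine this.congr_deriv ?_
  have h1s : (0:ℝ) < 1 + Real.sqrt (1 - x ^ 2) := by positivity
  field_simp
  ring_nf

lemma gw_hasDerivAt_F' (x : ℝ) (hx : |x| < 1) :
    HasDerivAt (fun y => ∫ θ in (0:ℝ)..(2 * Real.pi),
        (1 - y * Real.cos θ) * Real.log (1 - y * Real.cos θ))
      (2 * Real.pi * x / (1 + Real.sqrt (1 - x ^ 2))) x := by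
  have h2 : 0 < 1 - x ^ 2 := by nlinarith [sq_abs x, abs_nonneg x]
  have hs : 0 < Real.sqrt (1 - x ^ 2) := Real.sqrt_pos.mpr h2
  have hs2 : Real.sqrt (1 - x ^ 2) ^ 2 = 1 - x ^ 2 := Real.sq_sqrt h2.le
  have h1s : (0:ℝ) < 1 + Real.sqrt (1 - x ^ 2) := by positivity
  have key := gw_hasDerivAt_F x hx
  convert key using 1
  rw [intervalIntegral.integral_neg]
  rcases eq_or_ne x 0 with rfl | hx0
  · simp [integral_cos]
  · rw [gw_integral_deriv x hx hx0]
    field_simp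
    linear_combination hs2

lemma gw_hasDerivAt_Delta (x : ℝ) (hx : |x| < 1) :
    HasDerivAt (fun y => (∫ θ in (0:ℝ)..(2 * Real.pi),
        (1 - y * Real.cos θ) * Real.log (1 - y * Real.cos θ))
      - 2 * Real.pi * (1 - Real.sqrt (1 - y ^ 2)
          + Real.log ((1 + Real.sqrt (1 - y ^ 2)) / 2))) 0 x := by
  have := (gw_hasDerivAt_F' x hx).sub (gw_hasDerivAt_R x hx)
  rw [sub_self] at this
  exact this

lemma gw_Delta_zero :
    (∫ θ in (0:ℝ)..(2 * Real.pi), (1 - (0:ℝ) * Real.cos θ) * Real.log (1 - 0 * Real.cos θ))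
      - 2 * Real.pi * (1 - Real.sqrt (1 - (0:ℝ) ^ 2)
          + Real.log ((1 + Real.sqrt (1 - (0:ℝ) ^ 2)) / 2)) = 0 := by
  simp

lemma gw_Delta_eq_zero (a : ℝ) (ha : |a| < 1) :
    (∫ θ in (0:ℝ)..(2 * Real.pi), (1 - a * Real.cos θ) * Real.log (1 - a * Real.cos θ))
      - 2 * Real.pi * (1 - Real.sqrt (1 - a ^ 2)
          + Real.log ((1 + Real.sqrt (1 - a ^ 2)) / 2)) = 0 := by
  set Δ : ℝ → ℝ := fun y => (∫ θ in (0:ℝ)..(2 * Real.pi),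
        (1 - y * Real.cos θ) * Real.log (1 - y * Real.cos θ))
      - 2 * Real.pi * (1 - Real.sqrt (1 - y ^ 2)
          + Real.log ((1 + Real.sqrt (1 - y ^ 2)) / 2)) with hΔ
  have habs := abs_lt.mp ha
  rcases lt_trichotomy a 0 with hlt | heq | hgt
  · have hmem : ∀ x ∈ Set.Icc a 0, |x| < 1 := by
      intro x hx
      rw [abs_lt]
      constructor <;> [linarith [hx.1]; linarith [hx.2]]
    obtain ⟨c, hc, hceq⟩ := exists_hasDerivAt_eq_slope Δ (fun _ => 0) hlt
      (fun x hx => (gw_hasDerivAt_Delta x (hmem x hx)).continuousAt.continuousWithinAt)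
      (fun x hx => gw_hasDerivAt_Delta x (hmem x ⟨hx.1.le, hx.2.le⟩))
    have h0 : Δ 0 = 0 := gw_Delta_zero
    have heq : (Δ 0 - Δ a) / (0 - a) = 0 := by simpa using hceq.symm
    rcases div_eq_zero_iff.mp heq with h | h
    · have hΔa : Δ a = 0 := by linarith
      simpa only [hΔ] using hΔa
    · exact absurd h (by intro h'; linarith)
  · subst heq; exact gw_Delta_zero
  · have hmem : ∀ x ∈ Set.Icc 0 a, |x| < 1 := by
      intro x hx
      rw [abs_lt]
      constructor <;> [linarith [hx.1]; linarith [hx.2]]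
    obtain ⟨c, hc, hceq⟩ := exists_hasDerivAt_eq_slope Δ (fun _ => 0) hgt
      (fun x hx => (gw_hasDerivAt_Delta x (hmem x hx)).continuousAt.continuousWithinAt)
      (fun x hx => gw_hasDerivAt_Delta x (hmem x ⟨hx.1.le, hx.2.le⟩))
    have h0 : Δ 0 = 0 := gw_Delta_zero
    have heq : (Δ a - Δ 0) / (a - 0) = 0 := by simpa using hceq.symm
    rcases div_eq_zero_iff.mp heq with h | h
    · have hΔa : Δ a = 0 := by linarith
      simpa only [hΔ] using hΔa
    · exact absurd h (by intro h'; linarith)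

theorem gw_entropy_integral (a : ℝ) (ha : |a| < 1) :
    (1 / (2 * Real.pi)) * ∫ θ in (0 : ℝ)..(2 * Real.pi),
        (1 - a * Real.cos θ) * Real.log (1 - a * Real.cos θ)
      = 1 - Real.sqrt (1 - a ^ 2) + Real.log ((1 + Real.sqrt (1 - a ^ 2)) / 2) := by
  have h := gw_Delta_eq_zero a ha
  have hπ : (0:ℝ) < 2 * Real.pi := by positivity
  have : (∫ θ in (0:ℝ)..(2 * Real.pi), (1 - a * Real.cos θ) * Real.log (1 - a * Real.cos θ))
      = 2 * Real.pi * (1 - Real.sqrt (1 - a ^ 2)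
          + Real.log ((1 + Real.sqrt (1 - a ^ 2)) / 2)) := by linarith
  rw [this]
  field_simp
end

section
/- For d ≥ 0, the function H_d(γ) = -log(1-|γ|²) - 2d·log|1-γ| + H_d(0), defined for γ in the open unit disk 𝔻 ⊂ ℂ, is nonnegative and vanishes exactly at γ = γ_d = -d/(1+d). -/
/-- `H_d(0) = (1+2d)·log(1+2d) - 2(1+d)·log(1+d)`. -/
noncomputable def Hd0 (d : ℝ) : ℝ :=
  (1 + 2 * d) * Real.log (1 + 2 * d) - 2 * (1 + d) * Real.log (1 + d)

/-- `H_d(γ) = -log(1-|γ|²) - 2d·log|1-γ| + H_d(0)` for `γ` in the open unit disk. -/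
noncomputable def Hd (d : ℝ) (γ : ℂ) : ℝ :=
  -Real.log (1 - ‖γ‖ ^ 2) - 2 * d * Real.log (‖1 - γ‖) + Hd0 d

private lemma log_helper (a p q : ℝ) (ha : 0 < a) (hp : 0 < p) (hq : 0 < q) :
    Real.log (a * p ^ 2 / q) = Real.log a + 2 * Real.log p - Real.log q := by
  rw [Real.log_div (by positivity) (ne_of_gt hq),
    Real.log_mul (ne_of_gt ha) (by positivity), Real.log_pow]
  push_cast; ring

theorem Hd_nonneg_vanishes (d : ℝ) (hd : 0 ≤ d) (γ : ℂ) (hγ : ‖γ‖ < 1) :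
    0 ≤ Hd d γ ∧ (Hd d γ = 0 ↔ γ = ((-(d / (1 + d)) : ℝ) : ℂ)) := by
  have hp : (0:ℝ) < 1 + d := by linarith
  have hq : (0:ℝ) < 1 + 2 * d := by linarith
  set x := γ.re with hx_def
  set y := γ.im with hy_def
  have hxy : ‖γ‖ ^ 2 = x ^ 2 + y ^ 2 := by
    rw [Complex.sq_norm, Complex.normSq_apply]; ring
  have hA : (0:ℝ) < 1 - (x ^ 2 + y ^ 2) := by
    rw [← hxy]
    nlinarith [norm_nonneg γ]
  have h1γ : (1:ℂ) - γ ≠ 0 := by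
    intro h
    have : γ = 1 := by linear_combination -h
    rw [this] at hγ
    simp at hγ
  have hBabs : 0 < ‖1 - γ‖ := by
    simpa using (norm_pos_iff.mpr h1γ)
  have hB2 : ‖1 - γ‖ ^ 2 = (1 - x) ^ 2 + y ^ 2 := by
    rw [Complex.sq_norm, Complex.normSq_apply]
    simp [Complex.sub_re, Complex.sub_im, Complex.one_re, Complex.one_im]
    ring
  have hB : (0:ℝ) < (1 - x) ^ 2 + y ^ 2 := by rw [← hB2]; exact pow_pos hBabs 2
  set u : ℝ := (1 - (x ^ 2 + y ^ 2)) * (1 + d) ^ 2 / (1 + 2 * d) with hu_def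
  set v : ℝ := ((1 - x) ^ 2 + y ^ 2) * (1 + d) ^ 2 / (1 + 2 * d) ^ 2 with hv_def
  have hu : 0 < u := by rw [hu_def]; positivity
  have hv : 0 < v := by rw [hv_def]; positivity
  have hlogu : Real.log u = Real.log (1 - (x ^ 2 + y ^ 2)) + 2 * Real.log (1 + d)
      - Real.log (1 + 2 * d) := by
    rw [hu_def]; exact log_helper _ _ _ hA hp hq
  have hlogv : Real.log v = Real.log ((1 - x) ^ 2 + y ^ 2) + 2 * Real.log (1 + d)
      - 2 * Real.log (1 + 2 * d) := by
    rw [hv_def, show ((1 - x) ^ 2 + y ^ 2) * (1 + d) ^ 2 / (1 + 2 * d) ^ 2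
        = ((1 - x) ^ 2 + y ^ 2) / (1 + 2 * d) ^ 2 * (1 + d) ^ 2 / 1 by ring,
      log_helper _ _ _ (by positivity) hp one_pos,
      Real.log_div (ne_of_gt hB) (by positivity), Real.log_pow, Real.log_one]
    push_cast; ring
  have hlB : Real.log (‖1 - γ‖) = Real.log ((1 - x) ^ 2 + y ^ 2) / 2 := by
    rw [← hB2, Real.log_pow]; push_cast; ring
  have hgoal : Hd d γ = -(Real.log u + d * Real.log v) := by
    rw [Hd, Hd0, hxy, hlB]
    linear_combination hlogu + d * hlogv
  have hu1 : Real.log u ≤ u - 1 := Real.log_le_sub_one_of_pos hu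
  have hv1 : Real.log v ≤ v - 1 := Real.log_le_sub_one_of_pos hv
  have hN : (0:ℝ) ≤ (1 + d) * (((1 + d) * x + d) ^ 2 + (1 + d) ^ 2 * y ^ 2) := by positivity
  have hkey : u + d * v - (1 + d)
      = -((1 + d) * (((1 + d) * x + d) ^ 2 + (1 + d) ^ 2 * y ^ 2)) / (1 + 2 * d) ^ 2 := by
    rw [hu_def, hv_def]; field_simp; ring
  have hdiv : (0:ℝ) ≤ (1 + d) * (((1 + d) * x + d) ^ 2 + (1 + d) ^ 2 * y ^ 2) / (1 + 2 * d) ^ 2 :=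
    div_nonneg hN (by positivity)
  have hsum : u + d * v ≤ 1 + d := by
    rw [neg_div] at hkey; linarith
  have hdv : d * Real.log v ≤ d * (v - 1) := mul_le_mul_of_nonneg_left hv1 hd
  have hnonneg : 0 ≤ Hd d γ := by
    rw [hgoal]; linarith
  refine ⟨hnonneg, ?_, ?_⟩
  · intro h0
    -- from Hd = 0, the quadratic must vanish
    have hlog0 : Real.log u + d * Real.log v = 0 := by
      rw [hgoal] at h0; linarith
    have hNle : (1 + d) * (((1 + d) * x + d) ^ 2 + (1 + d) ^ 2 * y ^ 2) / (1 + 2 * d) ^ 2 ≤ 0 := by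
      rw [neg_div] at hkey; linarith
    have hN0 : (1 + d) * (((1 + d) * x + d) ^ 2 + (1 + d) ^ 2 * y ^ 2) / (1 + 2 * d) ^ 2 = 0 :=
      le_antisymm hNle hdiv
    have hS : ((1 + d) * x + d) ^ 2 + (1 + d) ^ 2 * y ^ 2 = 0 := by
      rcases div_eq_zero_iff.mp hN0 with h | h
      · rcases mul_eq_zero.mp h with h' | h'
        · exact absurd h' (by positivity)
        · exact h'
      · exact absurd h (by positivity)
    have hsq1 : (0:ℝ) ≤ ((1 + d) * x + d) ^ 2 := sq_nonneg _
    have hsq2 : (0:ℝ) ≤ (1 + d) ^ 2 * y ^ 2 := by positivity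
    have hx0 : (1 + d) * x + d = 0 := by
      have : ((1 + d) * x + d) ^ 2 = 0 := by linarith
      exact (pow_eq_zero_iff two_ne_zero).mp this
    have hy0 : y = 0 := by
      have h' : (1 + d) ^ 2 * y ^ 2 = 0 := by linarith
      have : y ^ 2 = 0 := by
        rcases mul_eq_zero.mp h' with h'' | h''
        · exact absurd h'' (by positivity)
        · exact h''
      exact (pow_eq_zero_iff two_ne_zero).mp this
    apply Complex.ext
    · rw [Complex.ofReal_re, ← hx_def]
      field_simp
      linarith
    · rw [Complex.ofReal_im, ← hy_def]
      exact hy0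
  · intro heq
    have hxv : x = -(d / (1 + d)) := by rw [hx_def, heq, Complex.ofReal_re]
    have hyv : y = 0 := by rw [hy_def, heq, Complex.ofReal_im]
    have hu1' : u = 1 := by rw [hu_def, hxv, hyv]; field_simp; ring
    have hv1' : v = 1 := by rw [hv_def, hxv, hyv]; field_simp; ring
    rw [hgoal, hu1', hv1']
    simp
end

section
/- As h → 0 in ℂ, the function H_d satisfies ((1+d)³/(1+2d)²)·|h|² + o(|h|²) ≤ H_d(γ_d + h) ≤ ((1+d)³/(1+2d))·|h|² + o(|h|²), where γ_d = -d/(1+d) and d ≥ 0. -/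
open Asymptotics Filter

lemma cube_littleO : (fun h : ℂ => ‖h‖ ^ 3) =o[nhds (0:ℂ)] (fun h => ‖h‖ ^ 2) := by
  have habs : Tendsto (fun h : ℂ => ‖h‖) (nhds 0) (nhds 0) := by
    simpa using continuous_norm.tendsto (0:ℂ)
  rw [isLittleO_iff]
  intro ε hε
  filter_upwards [habs.eventually_lt_const hε] with h hh
  have h0 : (0:ℝ) ≤ ‖h‖ := norm_nonneg h
  rw [Real.norm_eq_abs, Real.norm_eq_abs, abs_of_nonneg (by positivity),
    abs_of_nonneg (by positivity)]
  nlinarith [sq_nonneg (‖h‖)]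

lemma key_littleO (A b s : ℝ) (hA : 0 < A) :
    (fun h : ℂ => Real.log (A - 2*b*h.re + s*‖h‖ ^ 2) - Real.log A
      + (2*b*h.re - s*‖h‖ ^ 2)/A + 2*b^2*h.re^2/A^2)
      =o[nhds (0:ℂ)] (fun h => ‖h‖ ^ 2) := by
  have hnum_cont : Continuous (fun h : ℂ => 2*b*h.re - s*‖h‖ ^ 2) :=
    (continuous_const.mul Complex.continuous_re).sub
      (continuous_const.mul (continuous_norm.pow 2))
  set u : ℂ → ℝ := fun h => (2*b*h.re - s*‖h‖ ^ 2)/A with hudef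
  have hu_cont : Continuous u := hnum_cont.div_const A
  have hu0 : Tendsto u (nhds 0) (nhds 0) := by
    have := hu_cont.tendsto 0
    simpa [hudef] using this
  have habs : Tendsto (fun h : ℂ => ‖h‖) (nhds 0) (nhds 0) := by
    simpa using continuous_norm.tendsto (0:ℂ)
  set g₁ : ℂ → ℝ := fun h => Real.log (1 - u h) + (u h + (u h)^2/2) with hg1
  -- eventual equality
  have heq : (fun h : ℂ => Real.log (A - 2*b*h.re + s*‖h‖ ^ 2) - Real.log A
      + (2*b*h.re - s*‖h‖ ^ 2)/A + 2*b^2*h.re^2/A^2) =ᶠ[nhds (0:ℂ)]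
      (fun h => g₁ h + (s*(4*b*h.re - s*‖h‖ ^ 2)/(2*A^2)) * ‖h‖ ^ 2) := by
    filter_upwards [hu0.eventually_lt_const (by norm_num : (0:ℝ) < 1)] with h hu1
    have h1u : (0:ℝ) < 1 - u h := by linarith
    have harg : A - 2*b*h.re + s*‖h‖ ^ 2 = A * (1 - u h) := by
      simp only [hudef]
      field_simp
      ring
    rw [harg, Real.log_mul hA.ne' h1u.ne']
    simp only [hg1, hudef]
    field_simp
    ring
  refine heq.trans_isLittleO ?_
  have hog1 : g₁ =o[nhds (0:ℂ)] (fun h => ‖h‖ ^ 2) := by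
    have hbound : ∀ᶠ h : ℂ in nhds 0, ‖g₁ h‖ ≤ (2 * ((2*|b|+|s|)/A)^3) * ‖‖h‖ ^ 3‖ := by
      filter_upwards [hu0.eventually (Metric.ball_mem_nhds 0 (by norm_num : (0:ℝ) < 1/2)),
        habs.eventually_lt_const (by norm_num : (0:ℝ) < 1)] with h hu2 hh1
      have hu2' : |u h| < 1/2 := by simpa [Real.dist_eq] using hu2
      have hu1 : |u h| < 1 := by linarith
      have h0 : (0:ℝ) ≤ ‖h‖ := norm_nonneg h
      have hxle : |h.re| ≤ ‖h‖ := Complex.abs_re_le_norm h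
      have hC : |u h| ≤ (2*|b|+|s|)/A * ‖h‖ := by
        have e1 : |2*b*h.re - s*‖h‖ ^ 2| ≤ (2*|b|+|s|) * ‖h‖ := by
          have e2 : |2*b*h.re - s*‖h‖ ^ 2| ≤ |2*b*h.re| + |s*‖h‖ ^ 2| :=
            abs_sub _ _
          rw [abs_mul, abs_mul, abs_mul, abs_of_nonneg (by positivity : (0:ℝ) ≤ ‖h‖ ^ 2),
            abs_two] at e2
          have hq : ‖h‖ ^ 2 ≤ ‖h‖ := by nlinarith
          have t1 : 2 * |b| * |h.re| ≤ 2 * |b| * ‖h‖ :=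
            mul_le_mul_of_nonneg_left hxle (by positivity)
          have t2 : |s| * ‖h‖ ^ 2 ≤ |s| * ‖h‖ :=
            mul_le_mul_of_nonneg_left hq (abs_nonneg s)
          linarith
        have e3 : |u h| ≤ ((2*|b|+|s|) * ‖h‖) / A := by
          rw [show u h = (2*b*h.re - s*‖h‖ ^ 2)/A from rfl, abs_div, abs_of_pos hA]
          gcongr
        calc |u h| ≤ ((2*|b|+|s|) * ‖h‖) / A := e3
          _ = (2*|b|+|s|)/A * ‖h‖ := by ring
      have hsum : ∑ i ∈ Finset.range 2, u h ^ (i+1)/((i:ℝ)+1) = u h + u h ^ 2/2 := by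
        simp [Finset.sum_range_succ]
        norm_num
      have hkey := Real.abs_log_sub_add_sum_range_le hu1 2
      rw [hsum] at hkey
      norm_num at hkey
      have hCn : (0:ℝ) ≤ (2*|b|+|s|)/A := by positivity
      calc ‖g₁ h‖ = |u h + u h ^ 2/2 + Real.log (1 - u h)| := by
            rw [Real.norm_eq_abs, hg1]; congr 1; ring
        _ ≤ |u h| ^ 3 / (1 - |u h|) := hkey
        _ ≤ 2 * |u h| ^ 3 := by
            rw [div_le_iff₀ (by linarith)]
            nlinarith [pow_nonneg (abs_nonneg (u h)) 3]
        _ ≤ 2 * ((2*|b|+|s|)/A * ‖h‖) ^ 3 := by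
            gcongr
        _ = (2 * ((2*|b|+|s|)/A)^3) * ‖h‖ ^ 3 := by ring
        _ = (2 * ((2*|b|+|s|)/A)^3) * ‖‖h‖ ^ 3‖ := by
            rw [Real.norm_eq_abs,
              abs_of_nonneg (show (0:ℝ) ≤ ‖h‖ ^ 3 by positivity)]
    exact (IsBigO.of_bound _ hbound).trans_isLittleO cube_littleO
  have hog2 : (fun h : ℂ => (s*(4*b*h.re - s*‖h‖ ^ 2)/(2*A^2)) * ‖h‖ ^ 2)
      =o[nhds (0:ℂ)] (fun h => ‖h‖ ^ 2) := by
    have hc_cont : Continuous (fun h : ℂ => s*(4*b*h.re - s*‖h‖ ^ 2)/(2*A^2)) :=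
      (continuous_const.mul ((continuous_const.mul Complex.continuous_re).sub
        (continuous_const.mul (continuous_norm.pow 2)))).div_const _
    have hc : Tendsto (fun h : ℂ => s*(4*b*h.re - s*‖h‖ ^ 2)/(2*A^2)) (nhds 0) (nhds 0) := by
      simpa using hc_cont.tendsto 0
    have h1 := ((isLittleO_one_iff ℝ).2 hc).mul_isBigO
      (isBigO_refl (fun h : ℂ => ‖h‖ ^ 2) (nhds 0))
    simpa using h1
  exact hog1.add hog2

theorem Hd_quadratic_expansion (d : ℝ) (hd : 0 ≤ d) :
    ∃ e₁ e₂ : ℂ → ℝ,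
      (e₁ =o[nhds (0 : ℂ)] fun h => ‖h‖ ^ 2) ∧
      (e₂ =o[nhds (0 : ℂ)] fun h => ‖h‖ ^ 2) ∧
      (∀ᶠ h in nhds (0 : ℂ),
        (1 + d) ^ 3 / (1 + 2 * d) ^ 2 * ‖h‖ ^ 2 + e₁ h
            ≤ Hd d (((-(d / (1 + d)) : ℝ) : ℂ) + h) ∧
        Hd d (((-(d / (1 + d)) : ℝ) : ℂ) + h)
            ≤ (1 + d) ^ 3 / (1 + 2 * d) * ‖h‖ ^ 2 + e₂ h) := by
  have hd1 : (0:ℝ) < 1 + d := by linarith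
  have hd2 : (0:ℝ) < 1 + 2*d := by linarith
  have hApos : (0:ℝ) < (1+2*d)/(1+d)^2 := by positivity
  have hBpos : (0:ℝ) < ((1+2*d)/(1+d))^2 := by positivity
  have o1 := key_littleO ((1+2*d)/(1+d)^2) (-(d/(1+d))) (-1) hApos
  have o2 := key_littleO (((1+2*d)/(1+d))^2) ((1+2*d)/(1+d)) 1 hBpos
  have hq : ∀ h : ℂ, ‖h‖ ^ 2 = h.re^2 + h.im^2 := by
    intro h
    rw [Complex.sq_norm, Complex.normSq_apply]
    ring
  have hpt : ∀ h : ℂ, Hd d (((-(d / (1 + d)) : ℝ) : ℂ) + h)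
        - ((1+d)^3/(1+2*d)*h.re^2 + (1+d)^3/(1+2*d)^2*h.im^2)
      = -(Real.log ((1+2*d)/(1+d)^2 - 2*(-(d/(1+d)))*h.re + (-1)*‖h‖ ^ 2)
            - Real.log ((1+2*d)/(1+d)^2)
            + (2*(-(d/(1+d)))*h.re - (-1)*‖h‖ ^ 2)/((1+2*d)/(1+d)^2)
            + 2*(-(d/(1+d)))^2*h.re^2/((1+2*d)/(1+d)^2)^2)
        + (-d) * (Real.log (((1+2*d)/(1+d))^2 - 2*((1+2*d)/(1+d))*h.re + 1*‖h‖ ^ 2)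
            - Real.log (((1+2*d)/(1+d))^2)
            + (2*((1+2*d)/(1+d))*h.re - 1*‖h‖ ^ 2)/(((1+2*d)/(1+d))^2)
            + 2*((1+2*d)/(1+d))^2*h.re^2/(((1+2*d)/(1+d))^2)^2) := by
    intro h
    have e1 : (1:ℝ) - ‖(((-(d / (1 + d)) : ℝ) : ℂ)) + h‖ ^ 2
        = (1+2*d)/(1+d)^2 - 2*(-(d/(1+d)))*h.re + (-1)*‖h‖ ^ 2 := by
      rw [Complex.sq_norm, Complex.normSq_apply, hq h]
      simp only [Complex.add_re, Complex.add_im, Complex.ofReal_re, Complex.ofReal_im]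
      field_simp
      ring
    have e2 : ((1+2*d)/(1+d))^2 - 2*((1+2*d)/(1+d))*h.re + 1*‖h‖ ^ 2
        = ‖1 - ((((-(d / (1 + d)) : ℝ) : ℂ)) + h)‖ ^ 2 := by
      rw [hq h, Complex.sq_norm (1 - ((((-(d / (1 + d)) : ℝ) : ℂ)) + h)), Complex.normSq_apply]
      simp only [Complex.sub_re, Complex.sub_im, Complex.add_re, Complex.add_im,
        Complex.one_re, Complex.one_im, Complex.ofReal_re, Complex.ofReal_im]
      field_simp
      ring
    have e2' : 2*d*Real.log (‖1 - ((((-(d / (1 + d)) : ℝ) : ℂ)) + h)‖)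
        = d * Real.log (((1+2*d)/(1+d))^2 - 2*((1+2*d)/(1+d))*h.re + 1*‖h‖ ^ 2) := by
      rw [e2, Real.log_pow]
      push_cast
      ring
    have lA : Real.log ((1+2*d)/(1+d)^2) = Real.log (1+2*d) - 2*Real.log (1+d) := by
      rw [Real.log_div hd2.ne' (by positivity), Real.log_pow]
      push_cast
      ring
    have lB : Real.log (((1+2*d)/(1+d))^2) = 2*Real.log (1+2*d) - 2*Real.log (1+d) := by
      rw [Real.log_pow, Real.log_div hd2.ne' hd1.ne']
      push_cast
      ring
    simp only [Hd, Hd0]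
    rw [e1, e2', lA, lB, hq h]
    field_simp
    ring
  have hE : (fun h : ℂ => Hd d (((-(d / (1 + d)) : ℝ) : ℂ) + h)
        - ((1+d)^3/(1+2*d)*h.re^2 + (1+d)^3/(1+2*d)^2*h.im^2))
      =o[nhds (0:ℂ)] (fun h => ‖h‖ ^ 2) := by
    have hcomb := o1.neg_left.add (o2.const_mul_left (-d))
    exact hcomb.congr_left fun h => (hpt h).symm
  have h12 : (1+2*d) ≤ (1+2*d)^2 := by nlinarith
  have hC : (1+d)^3/(1+2*d)^2 ≤ (1+d)^3/(1+2*d) := by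
    apply div_le_div_of_nonneg_left (by positivity) hd2 h12
  refine ⟨_, _, hE, hE, Filter.Eventually.of_forall fun h => ⟨?_, ?_⟩⟩
  · have := mul_le_mul_of_nonneg_right hC (sq_nonneg h.re)
    rw [hq h]
    nlinarith [this]
  · have := mul_le_mul_of_nonneg_right hC (sq_nonneg h.im)
    rw [hq h]
    nlinarith [this]
end

section
/- Let d > 0 and θ_d ∈ (0,π) satisfy sin(θ_d/2) = d/(1+d). Then the function f(θ) = (1+d)·√(sin²(θ/2) - sin²(θ_d/2)) / (2π·sin(θ/2)), defined for θ ∈ (θ_d, 2π - θ_d), integrates to 1 over (θ_d, 2π - θ_d); i.e. the Hua-Pickrell equilibrium measure HP_d is a probability measure. -/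
open Real Set intervalIntegral

/-- On `[θd/2, π - θd/2]`, `sin x ≥ sin (θd/2)`. -/
lemma HP_sin_lb {a x : ℝ} (ha : 0 < a) (hx1 : a ≤ x) (hx2 : x ≤ Real.pi - a) :
    Real.sin a ≤ Real.sin x := by
  have hapi : a ≤ Real.pi / 2 := by linarith
  rcases le_total x (Real.pi / 2) with h | h
  · exact Real.strictMonoOn_sin.monotoneOn ⟨by linarith [Real.pi_pos], hapi⟩
      ⟨by linarith, h⟩ hx1
  · rw [← Real.sin_pi_sub x]
    exact Real.strictMonoOn_sin.monotoneOn ⟨by linarith [Real.pi_pos], hapi⟩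
      ⟨by linarith, by linarith⟩ (by linarith)

/-- On `(θd/2, π - θd/2)`, `sin x > sin (θd/2)`. -/
lemma HP_sin_lb' {a x : ℝ} (ha : 0 < a) (hx1 : a < x) (hx2 : x < Real.pi - a) :
    Real.sin a < Real.sin x := by
  have hapi : a < Real.pi / 2 := by linarith
  rcases le_total x (Real.pi / 2) with h | h
  · exact Real.strictMonoOn_sin ⟨by linarith [Real.pi_pos], hapi.le⟩ ⟨by linarith, h⟩ hx1
  · rw [← Real.sin_pi_sub x]
    exact Real.strictMonoOn_sin ⟨by linarith [Real.pi_pos], hapi.le⟩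
      ⟨by linarith, by linarith⟩ (by linarith)

set_option maxHeartbeats 1000000 in
theorem HP_equilibrium_is_probability (d : ℝ) (hd : 0 < d)
    (θd : ℝ) (hθd : θd ∈ Set.Ioo (0 : ℝ) Real.pi)
    (hsin : Real.sin (θd / 2) = d / (1 + d)) :
    ∫ θ in θd..(2 * Real.pi - θd),
        (1 + d) * Real.sqrt (Real.sin (θ / 2) ^ 2 - Real.sin (θd / 2) ^ 2)
          / (2 * Real.pi * Real.sin (θ / 2)) = 1 := by
  obtain ⟨hθ0, hθπ⟩ := hθd
  have hπ := Real.pi_pos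
  set s : ℝ := Real.sin (θd / 2) with hs_def
  set c : ℝ := Real.cos (θd / 2) with hc_def
  have hd1 : (0:ℝ) < 1 + d := by linarith
  have hs_pos : 0 < s := Real.sin_pos_of_pos_of_lt_pi (by linarith) (by linarith)
  have hc_pos : 0 < c := Real.cos_pos_of_mem_Ioo ⟨by linarith, by linarith⟩
  have hsc : s ^ 2 + c ^ 2 = 1 := Real.sin_sq_add_cos_sq _
  -- antiderivative
  set F : ℝ → ℝ := fun θ => (1 + d) / (2 * Real.pi) *
      (2 * s * Real.arcsin (s * Real.cos (θ / 2) / (c * Real.sin (θ / 2)))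
        - 2 * Real.arcsin (Real.cos (θ / 2) / c)) with hF_def
  have hab : θd ≤ 2 * Real.pi - θd := by linarith
  -- positivity of sin (θ/2) on the closed interval
  have hsin_pos : ∀ θ ∈ Set.Icc θd (2 * Real.pi - θd), 0 < Real.sin (θ / 2) := by
    intro θ hθ
    have := HP_sin_lb (a := θd / 2) (x := θ / 2) (by linarith)
      (by linarith [hθ.1]) (by linarith [hθ.2])
    linarith
  -- continuity of the integrand on the closed interval
  have hint : IntervalIntegrable (fun θ =>
      (1 + d) * Real.sqrt (Real.sin (θ / 2) ^ 2 - s ^ 2)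
        / (2 * Real.pi * Real.sin (θ / 2))) MeasureTheory.volume θd (2 * Real.pi - θd) := by
    apply ContinuousOn.intervalIntegrable_of_Icc hab
    apply ContinuousOn.div
    · fun_prop
    · fun_prop
    · intro θ hθ
      have := hsin_pos θ hθ
      positivity
  -- continuity of F on the closed interval
  have hFcont : ContinuousOn F (Set.Icc θd (2 * Real.pi - θd)) := by
    apply ContinuousOn.mul continuousOn_const
    apply ContinuousOn.sub
    · apply ContinuousOn.mul continuousOn_const
      apply Real.continuous_arcsin.comp_continuousOn
      apply ContinuousOn.div (by fun_prop) (by fun_prop)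
      intro θ hθ
      have := hsin_pos θ hθ
      positivity
    · exact continuousOn_const.mul (Real.continuous_arcsin.comp
        ((Real.continuous_cos.comp (continuous_id.div_const 2)).div_const c)).continuousOn
  -- derivative of F at interior points
  have hFderiv : ∀ θ ∈ Set.Ioo θd (2 * Real.pi - θd),
      HasDerivAt F ((1 + d) * Real.sqrt (Real.sin (θ / 2) ^ 2 - s ^ 2)
        / (2 * Real.pi * Real.sin (θ / 2))) θ := by
    intro θ hθ
    obtain ⟨hθ1, hθ2⟩ := hθ
    have hσs : s < Real.sin (θ / 2) :=
      HP_sin_lb' (by linarith) (by linarith) (by linarith)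
    set σ := Real.sin (θ / 2) with hσ_def
    set γ := Real.cos (θ / 2) with hγ_def
    have hσ_pos : 0 < σ := lt_trans hs_pos hσs
    have hσγ : σ ^ 2 + γ ^ 2 = 1 := Real.sin_sq_add_cos_sq _
    have hsq : s ^ 2 < σ ^ 2 := by nlinarith
    have hγc : γ ^ 2 < c ^ 2 := by nlinarith
    have hQpos : 0 < σ ^ 2 - s ^ 2 := by linarith
    set Q := Real.sqrt (σ ^ 2 - s ^ 2) with hQ_def
    have hQp : 0 < Q := Real.sqrt_pos.2 hQpos
    have hQ2 : Q ^ 2 = σ ^ 2 - s ^ 2 := Real.sq_sqrt hQpos.le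
    have hhalf : HasDerivAt (fun t : ℝ => t / 2) (1 / 2) θ := (hasDerivAt_id θ).div_const 2
    have hcosθ : HasDerivAt (fun t : ℝ => Real.cos (t / 2)) (-σ * (1 / 2)) θ := by
      simpa using hhalf.cos
    have hsinθ : HasDerivAt (fun t : ℝ => Real.sin (t / 2)) (γ * (1 / 2)) θ := by
      simpa using hhalf.sin
    -- first arcsin term
    have harg1 : (γ / c) ^ 2 < 1 := by
      rw [div_pow, div_lt_one (by positivity)]; exact hγc
    have hne1 : γ / c ≠ 1 := by intro h; rw [h] at harg1; norm_num at harg1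
    have hne1' : γ / c ≠ -1 := by intro h; rw [h] at harg1; norm_num at harg1
    have h1 : HasDerivAt (fun t => Real.cos (t / 2) / c) (-σ * (1 / 2) / c) θ :=
      hcosθ.div_const c
    have hA : HasDerivAt (fun t => Real.arcsin (Real.cos (t / 2) / c))
        (1 / Real.sqrt (1 - (γ / c) ^ 2) * (-σ * (1 / 2) / c)) θ :=
      HasDerivAt.comp (h₂ := Real.arcsin) θ (Real.hasDerivAt_arcsin hne1' hne1) h1
    have e1 : Real.sqrt (1 - (γ / c) ^ 2) = Q / c := by
      rw [show 1 - (γ / c) ^ 2 = (σ ^ 2 - s ^ 2) / c ^ 2 by field_simp; nlinarith,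
        Real.sqrt_div hQpos.le, Real.sqrt_sq hc_pos.le]
    -- second arcsin term
    have hv2 : (s * γ / (c * σ)) ^ 2 < 1 := by
      rw [div_pow, div_lt_one (by positivity)]
      have h1' : s ^ 2 * γ ^ 2 < s ^ 2 * c ^ 2 :=
        mul_lt_mul_of_pos_left hγc (by positivity)
      have h2' : s ^ 2 * c ^ 2 < σ ^ 2 * c ^ 2 :=
        mul_lt_mul_of_pos_right hsq (by positivity)
      calc (s * γ) ^ 2 = s ^ 2 * γ ^ 2 := by ring
        _ < σ ^ 2 * c ^ 2 := lt_trans h1' h2'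
        _ = (c * σ) ^ 2 := by ring
    have hvne1 : s * γ / (c * σ) ≠ 1 := by intro h; rw [h] at hv2; norm_num at hv2
    have hvne1' : s * γ / (c * σ) ≠ -1 := by intro h; rw [h] at hv2; norm_num at hv2
    have hnum : HasDerivAt (fun t => s * Real.cos (t / 2)) (s * (-σ * (1 / 2))) θ :=
      hcosθ.const_mul s
    have hden : HasDerivAt (fun t => c * Real.sin (t / 2)) (c * (γ * (1 / 2))) θ :=
      hsinθ.const_mul c
    have hden0 : c * σ ≠ 0 := by positivity
    have hv : HasDerivAt (fun t => s * Real.cos (t / 2) / (c * Real.sin (t / 2)))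
        ((s * (-σ * (1 / 2)) * (c * σ) - s * γ * (c * (γ * (1 / 2)))) / (c * σ) ^ 2) θ :=
      hnum.div hden hden0
    have hB : HasDerivAt (fun t => Real.arcsin (s * Real.cos (t / 2) / (c * Real.sin (t / 2))))
        (1 / Real.sqrt (1 - (s * γ / (c * σ)) ^ 2) *
          ((s * (-σ * (1 / 2)) * (c * σ) - s * γ * (c * (γ * (1 / 2)))) / (c * σ) ^ 2)) θ :=
      HasDerivAt.comp (h₂ := Real.arcsin) θ (Real.hasDerivAt_arcsin hvne1' hvne1) hv
    have e2 : Real.sqrt (1 - (s * γ / (c * σ)) ^ 2) = Q / (c * σ) := by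
      rw [show 1 - (s * γ / (c * σ)) ^ 2 = (σ ^ 2 - s ^ 2) / (c * σ) ^ 2 by
          field_simp; nlinarith,
        Real.sqrt_div hQpos.le, Real.sqrt_sq (by positivity)]
    -- simplify the two derivative values
    have hAval : 1 / Real.sqrt (1 - (γ / c) ^ 2) * (-σ * (1 / 2) / c) = -σ / (2 * Q) := by
      rw [e1]; field_simp
    have hBval : 1 / Real.sqrt (1 - (s * γ / (c * σ)) ^ 2) *
        ((s * (-σ * (1 / 2)) * (c * σ) - s * γ * (c * (γ * (1 / 2)))) / (c * σ) ^ 2)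
        = -s / (2 * σ * Q) := by
      rw [e2]
      rw [div_div_eq_mul_div, one_mul]
      rw [div_mul_div_comm]
      rw [div_eq_div_iff (by positivity) (by positivity)]
      linear_combination (-(s * c ^ 2 * σ ^ 2 * Q)) * hσγ
    -- combine
    have hcomb := ((hB.const_mul (2 * s)).sub (hA.const_mul 2)).const_mul
      ((1 + d) / (2 * Real.pi))
    rw [hAval, hBval] at hcomb
    have hval : (1 + d) * Q / (2 * Real.pi * σ)
        = (1 + d) / (2 * Real.pi) * (2 * s * (-s / (2 * σ * Q)) - 2 * (-σ / (2 * Q))) := by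
      field_simp
      linear_combination hQ2
    simp only [hF_def]
    rw [hval]
    exact hcomb
  -- apply FTC
  have := intervalIntegral.integral_eq_sub_of_hasDerivAt_of_le hab hFcont hFderiv hint
  rw [this]
  -- endpoint values
  have hb2 : (2 * Real.pi - θd) / 2 = Real.pi - θd / 2 := by ring
  have hcb : Real.cos ((2 * Real.pi - θd) / 2) = -c := by rw [hb2, Real.cos_pi_sub]
  have hsb : Real.sin ((2 * Real.pi - θd) / 2) = s := by rw [hb2, Real.sin_pi_sub]
  have hFb : F (2 * Real.pi - θd) = (1 + d) / (2 * Real.pi) * (2 * s * (-(Real.pi/2)) - 2 * (-(Real.pi/2))) := by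
    simp only [hF_def, hcb, hsb]
    rw [show s * -c / (c * s) = -1 by rw [mul_comm c s]; field_simp,
      show -c / c = -1 by field_simp, Real.arcsin_neg, Real.arcsin_one]
  have hFa : F θd = (1 + d) / (2 * Real.pi) * (2 * s * (Real.pi/2) - 2 * (Real.pi/2)) := by
    simp only [hF_def, ← hs_def, ← hc_def]
    rw [show s * c / (c * s) = 1 by rw [mul_comm c s]; field_simp,
      show c / c = 1 by field_simp, Real.arcsin_one]
  rw [hFb, hFa, hsin]
  field_simp
  ring
end

section
/- For g > 1 and m² = 1/(g-1), the function x ↦ (2√(1+m²)/(π m²))·√(m² - x²)/(1+x²)² on [-m, m] integrates to 1. -/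
noncomputable def GWF (m x : ℝ) : ℝ :=
  x * Real.sqrt (m ^ 2 - x ^ 2) / (2 * (1 + x ^ 2)) +
    m ^ 2 / (2 * Real.sqrt (1 + m ^ 2)) *
      Real.arcsin (Real.sqrt (1 + m ^ 2) * x / (m * Real.sqrt (1 + x ^ 2)))

set_option maxHeartbeats 1000000 in
theorem GWF_deriv (m : ℝ) (hm : 0 < m) {x : ℝ} (hx : x ∈ Set.Ioo (-m) m) :
    HasDerivAt (GWF m) (Real.sqrt (m ^ 2 - x ^ 2) / (1 + x ^ 2) ^ 2) x := by
  obtain ⟨hx1, hx2⟩ := hx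
  have hx2' : x ^ 2 < m ^ 2 := by nlinarith
  have hs_pos : 0 < Real.sqrt (m ^ 2 - x ^ 2) := Real.sqrt_pos.mpr (by nlinarith)
  have ht_pos : 0 < Real.sqrt (1 + x ^ 2) := Real.sqrt_pos.mpr (by positivity)
  have hk_pos : 0 < Real.sqrt (1 + m ^ 2) := Real.sqrt_pos.mpr (by positivity)
  set s := Real.sqrt (m ^ 2 - x ^ 2) with hs_def
  set t := Real.sqrt (1 + x ^ 2) with ht_def
  set k := Real.sqrt (1 + m ^ 2) with hk_def
  have hs2 : s ^ 2 = m ^ 2 - x ^ 2 := Real.sq_sqrt (by nlinarith)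
  have ht2 : t ^ 2 = 1 + x ^ 2 := Real.sq_sqrt (by positivity)
  have hk2 : k ^ 2 = 1 + m ^ 2 := Real.sq_sqrt (by positivity)
  -- derivative of s
  have hds : HasDerivAt (fun y => Real.sqrt (m ^ 2 - y ^ 2)) (-(2 * x) / (2 * s)) x := by
    have h1 : HasDerivAt (fun y : ℝ => m ^ 2 - y ^ 2) (-(2 * x)) x := by
      simpa using ((hasDerivAt_pow 2 x).const_sub (m ^ 2))
    exact h1.sqrt (by nlinarith)
  -- derivative of t
  have hdt : HasDerivAt (fun y => Real.sqrt (1 + y ^ 2)) (2 * x / (2 * t)) x := by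
    have h1 : HasDerivAt (fun y : ℝ => 1 + y ^ 2) (2 * x) x := by
      simpa using ((hasDerivAt_pow 2 x).const_add 1)
    exact h1.sqrt (by positivity)
  -- first summand
  have hA : HasDerivAt (fun y => y * Real.sqrt (m ^ 2 - y ^ 2) / (2 * (1 + y ^ 2)))
      (((s + x * (-(2 * x) / (2 * s))) * (2 * (1 + x ^ 2)) - x * s * (2 * (2 * x))) /
        (2 * (1 + x ^ 2)) ^ 2) x := by
    have hnum : HasDerivAt (fun y => y * Real.sqrt (m ^ 2 - y ^ 2))
        (1 * s + x * (-(2 * x) / (2 * s))) x := (hasDerivAt_id x).mul hds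
    have hden : HasDerivAt (fun y : ℝ => 2 * (1 + y ^ 2)) (2 * (2 * x)) x := by
      simpa using ((hasDerivAt_pow 2 x).const_add 1).const_mul 2
    have := hnum.div hden (by positivity)
    rw [one_mul] at this; exact this
  -- inner function of arcsin
  set u := k * x / (m * t) with hu_def
  have hu2 : u ^ 2 < 1 := by
    rw [hu_def, div_pow, div_lt_one (by positivity)]
    rw [mul_pow, mul_pow, hk2, ht2]
    nlinarith
  have hu_deriv : HasDerivAt (fun y => k * y / (m * Real.sqrt (1 + y ^ 2)))
      ((k * (m * t) - k * x * (m * (2 * x / (2 * t)))) / (m * t) ^ 2) x := by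
    have hnum : HasDerivAt (fun y => k * y) k x := by
      simpa using (hasDerivAt_id x).const_mul k
    have hden : HasDerivAt (fun y => m * Real.sqrt (1 + y ^ 2)) (m * (2 * x / (2 * t))) x :=
      hdt.const_mul m
    exact hnum.div hden (by positivity)
  have hsq : Real.sqrt (1 - u ^ 2) = s / (m * t) := by
    have : 1 - u ^ 2 = (s / (m * t)) ^ 2 := by
      rw [hu_def, div_pow, div_pow, mul_pow, mul_pow, hk2, ht2, hs2]
      field_simp
      ring
    rw [this, Real.sqrt_sq (by positivity)]
  have hB : HasDerivAt
      (fun y => m ^ 2 / (2 * k) *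
        Real.arcsin (k * y / (m * Real.sqrt (1 + y ^ 2))))
      (m ^ 2 / (2 * k) *
        ((1 / Real.sqrt (1 - u ^ 2)) *
          ((k * (m * t) - k * x * (m * (2 * x / (2 * t)))) / (m * t) ^ 2))) x := by
    have harc : HasDerivAt Real.arcsin (1 / Real.sqrt (1 - u ^ 2)) u :=
      Real.hasDerivAt_arcsin (by nlinarith [hu2, sq_nonneg (u+1)])
        (by nlinarith [hu2, sq_nonneg (u-1)])
    exact (harc.comp x hu_deriv).const_mul _
  have := hA.add hB
  refine this.congr_deriv ?_
  rw [hsq]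
  have hs0 : s ≠ 0 := ne_of_gt hs_pos
  have ht0 : t ≠ 0 := ne_of_gt ht_pos
  have hk0 : k ≠ 0 := ne_of_gt hk_pos
  have e1 : ((s + x * (-(2 * x) / (2 * s))) * (2 * (1 + x ^ 2)) - x * s * (2 * (2 * x))) /
      (2 * (1 + x ^ 2)) ^ 2 = (m ^ 2 - 2 * x ^ 2 - m ^ 2 * x ^ 2) / (2 * s * (1 + x ^ 2) ^ 2) := by
    rw [div_eq_div_iff (by positivity) (by positivity)]
    field_simp
    ring_nf
    linear_combination (1 - x ^ 2) * hs2
  have e2 : m ^ 2 / (2 * k) *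
      (1 / (s / (m * t)) * ((k * (m * t) - k * x * (m * (2 * x / (2 * t)))) / (m * t) ^ 2)) =
      m ^ 2 * (1 + x ^ 2) / (2 * s * (1 + x ^ 2) ^ 2) := by
    rw [one_div_div]
    field_simp
    ring_nf
    linear_combination (x ^ 2) * ht2
  rw [e1, e2, ← add_div]
  have e3 : m ^ 2 - 2 * x ^ 2 - m ^ 2 * x ^ 2 + m ^ 2 * (1 + x ^ 2) = 2 * s * s := by
    nlinarith [hs2]
  rw [e3, div_eq_div_iff (by positivity) (by positivity)]
  ring

theorem GW_pushforward_gapped_is_probability (g m : ℝ) (hg : 1 < g) (hm : 0 < m)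
    (hm2 : m ^ 2 = 1 / (g - 1)) :
    ∫ x in (-m)..m,
        (2 * Real.sqrt (1 + m ^ 2) / (Real.pi * m ^ 2))
          * Real.sqrt (m ^ 2 - x ^ 2) / (1 + x ^ 2) ^ 2 = 1 := by
  have hk_pos : 0 < Real.sqrt (1 + m ^ 2) := Real.sqrt_pos.mpr (by positivity)
  set k := Real.sqrt (1 + m ^ 2) with hk_def
  have hcontf : Continuous fun x : ℝ => Real.sqrt (m ^ 2 - x ^ 2) / (1 + x ^ 2) ^ 2 := by
    apply Continuous.div (by fun_prop) (by fun_prop)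
    intro x; positivity
  have hcontF : Continuous (GWF m) := by
    apply Continuous.add
    · apply Continuous.div (by fun_prop) (by fun_prop)
      intro x; positivity
    · apply Continuous.mul continuous_const
      apply Real.continuous_arcsin.comp
      apply Continuous.div (by fun_prop) (by fun_prop)
      intro x; positivity
  have hint : IntervalIntegrable (fun x : ℝ => Real.sqrt (m ^ 2 - x ^ 2) / (1 + x ^ 2) ^ 2)
      MeasureTheory.volume (-m) m := hcontf.intervalIntegrable _ _
  have hftc : ∫ x in (-m)..m, Real.sqrt (m ^ 2 - x ^ 2) / (1 + x ^ 2) ^ 2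
      = GWF m m - GWF m (-m) :=
    intervalIntegral.integral_eq_sub_of_hasDerivAt_of_le (by linarith)
      hcontF.continuousOn (fun x hx => GWF_deriv m hm hx) hint
  have hmm : Real.sqrt (m ^ 2 - m ^ 2) = 0 := by simp
  have hFm : GWF m m = m ^ 2 / (2 * k) * (Real.pi / 2) := by
    unfold GWF
    rw [show m ^ 2 - m ^ 2 = 0 by ring, Real.sqrt_zero,
      show k * m / (m * Real.sqrt (1 + m ^ 2)) = 1 by
        rw [← hk_def]; field_simp,
      Real.arcsin_one]
    ring
  have hFm' : GWF m (-m) = m ^ 2 / (2 * k) * (-(Real.pi / 2)) := by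
    unfold GWF
    rw [show m ^ 2 - (-m) ^ 2 = 0 by ring, Real.sqrt_zero,
      show k * -m / (m * Real.sqrt (1 + (-m) ^ 2)) = -1 by
        rw [show (1 : ℝ) + (-m) ^ 2 = 1 + m ^ 2 by ring, ← hk_def]; field_simp,
      Real.arcsin_neg_one]
    ring
  have hval : ∫ x in (-m)..m, Real.sqrt (m ^ 2 - x ^ 2) / (1 + x ^ 2) ^ 2
      = Real.pi * m ^ 2 / (2 * k) := by
    rw [hftc, hFm, hFm']; ring
  calc ∫ x in (-m)..m,
        (2 * k / (Real.pi * m ^ 2)) * Real.sqrt (m ^ 2 - x ^ 2) / (1 + x ^ 2) ^ 2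
      = ∫ x in (-m)..m,
        (2 * k / (Real.pi * m ^ 2)) * (Real.sqrt (m ^ 2 - x ^ 2) / (1 + x ^ 2) ^ 2) := by
        simp_rw [mul_div_assoc]
    _ = (2 * k / (Real.pi * m ^ 2)) *
        ∫ x in (-m)..m, Real.sqrt (m ^ 2 - x ^ 2) / (1 + x ^ 2) ^ 2 := by
        rw [intervalIntegral.integral_const_mul]
    _ = 1 := by
        rw [hval]
        have hpi := Real.pi_pos
        field_simp
end

section
/- For d > 0 and p² = (1+2d)/d², the function x ↦ (1/(π(√(1+p²) - 1)))·√(p² - x²)/(1+x²) on [-p, p] integrates to 1. -/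
open Real
set_option maxHeartbeats 1000000

lemma HP_key (p : ℝ) (hp : 0 < p) :
    ∫ x in (-p)..p, Real.sqrt (p ^ 2 - x ^ 2) / (1 + x ^ 2)
      = (Real.sqrt (1 + p ^ 2) - 1) * Real.pi := by
  set c := Real.sqrt (1 + p ^ 2) with hcdef
  have hc2 : c ^ 2 = 1 + p ^ 2 := Real.sq_sqrt (by nlinarith)
  have hc0 : 0 < c := Real.sqrt_pos.mpr (by nlinarith)
  have hc1 : 1 < c := by nlinarith
  set F : ℝ → ℝ := fun x => c * Real.arcsin (c * x / (p * Real.sqrt (1 + x ^ 2)))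
      - Real.arcsin (x / p) with hFdef
  have hFc : Continuous F := by
    apply Continuous.sub
    · apply continuous_const.mul
      apply Real.continuous_arcsin.comp
      apply Continuous.div
      · exact continuous_const.mul continuous_id
      · exact continuous_const.mul (Real.continuous_sqrt.comp (by continuity))
      · intro x
        have : 0 < Real.sqrt (1 + x ^ 2) := Real.sqrt_pos.mpr (by nlinarith)
        positivity
    · exact Real.continuous_arcsin.comp (continuous_id.div_const p)
  have hfc : Continuous (fun x : ℝ => Real.sqrt (p ^ 2 - x ^ 2) / (1 + x ^ 2)) := by
    apply Continuous.div
    · exact Real.continuous_sqrt.comp (by continuity)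
    · continuity
    · intro x; nlinarith [sq_nonneg x]
  have hderiv : ∀ x ∈ Set.Ioo (-p) p,
      HasDerivAt F (Real.sqrt (p ^ 2 - x ^ 2) / (1 + x ^ 2)) x := by
    intro x hx
    obtain ⟨hx1, hx2⟩ := hx
    have hxx : x ^ 2 < p ^ 2 := by nlinarith
    set s := Real.sqrt (p ^ 2 - x ^ 2) with hsdef
    set t := Real.sqrt (1 + x ^ 2) with htdef
    have hs : 0 < s := Real.sqrt_pos.mpr (by nlinarith)
    have ht : 0 < t := Real.sqrt_pos.mpr (by nlinarith)
    have hs2 : s ^ 2 = p ^ 2 - x ^ 2 := Real.sq_sqrt (by nlinarith)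
    have ht2 : t ^ 2 = 1 + x ^ 2 := Real.sq_sqrt (by nlinarith)
    -- derivative of t
    have hT : HasDerivAt (fun y : ℝ => Real.sqrt (1 + y ^ 2)) (x / t) x := by
      have h1 : HasDerivAt (fun y : ℝ => 1 + y ^ 2) (2 * x) x := by
        simpa using (hasDerivAt_pow 2 x).const_add 1
      have h2 := (Real.hasDerivAt_sqrt (by nlinarith : 1 + x ^ 2 ≠ 0)).comp x h1
      refine h2.congr_deriv ?_; symm
      rw [← htdef]
      field_simp
    have hden_ne : p * t ≠ 0 := by positivity
    have hH : HasDerivAt (fun y : ℝ => c * y / (p * Real.sqrt (1 + y ^ 2)))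
        ((c * (p * t) - c * x * (p * (x / t))) / (p * t) ^ 2) x := by
      have hnum : HasDerivAt (fun y : ℝ => c * y) c x := by
        simpa using (hasDerivAt_id x).const_mul c
      exact hnum.div (hT.const_mul p) hden_ne
    -- sqrt facts
    have e1 : 1 - (c * x / (p * t)) ^ 2 = (s / (p * t)) ^ 2 := by
      field_simp
      nlinarith [hs2, ht2, hc2]
    have hh2 : (c * x / (p * t)) ^ 2 < 1 := by
      have : 0 < (s / (p * t)) ^ 2 := by positivity
      nlinarith [e1]
    have hne1 : c * x / (p * t) ≠ 1 := by
      intro w; rw [w] at hh2; norm_num at hh2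
    have hnem1 : c * x / (p * t) ≠ -1 := by
      intro w; rw [w] at hh2; norm_num at hh2
    have hA : Real.sqrt (1 - (c * x / (p * t)) ^ 2) = s / (p * t) := by
      rw [e1, Real.sqrt_sq (by positivity)]
    have hB : Real.sqrt (1 - (x / p) ^ 2) = s / p := by
      have e2 : 1 - (x / p) ^ 2 = (s / p) ^ 2 := by
        field_simp
        nlinarith [hs2]
      rw [e2, Real.sqrt_sq (by positivity)]
    have hArc := (Real.hasDerivAt_arcsin hnem1 hne1).comp x hH
    have hxp1 : x / p < 1 := by rw [div_lt_one hp]; exact hx2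
    have hxpm1 : -1 < x / p := by rw [lt_div_iff₀ hp]; linarith
    have hArc2 := (Real.hasDerivAt_arcsin (ne_of_gt hxpm1) (ne_of_lt hxp1)).comp x
      ((hasDerivAt_id x).div_const p)
    have hFd := (hArc.const_mul c).sub hArc2
    refine hFd.congr_deriv ?_; symm
    rw [hA, hB, show (1 : ℝ) + x ^ 2 = t ^ 2 from ht2.symm]
    have hkey : c ^ 2 * (t ^ 2 - x ^ 2) - t ^ 2 = s ^ 2 := by
      rw [hc2, ht2, hs2]; ring
    field_simp
    ring_nf
    linear_combination (-1 : ℝ) * hkey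
  have hint : IntervalIntegrable (fun x : ℝ => Real.sqrt (p ^ 2 - x ^ 2) / (1 + x ^ 2))
      MeasureTheory.volume (-p) p := hfc.intervalIntegrable _ _
  have := intervalIntegral.integral_eq_sub_of_hasDeriv_right_of_le (by linarith)
    hFc.continuousOn (fun x hx => (hderiv x hx).hasDerivWithinAt) hint
  rw [this]
  have hFp : F p = c * (Real.pi / 2) - Real.pi / 2 := by
    have h1 : c * p / (p * Real.sqrt (1 + p ^ 2)) = 1 := by
      rw [← hcdef]; field_simp
    simp only [hFdef, h1, Real.arcsin_one, div_self hp.ne', Real.arcsin_one]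
  have hFmp : F (-p) = c * (-(Real.pi / 2)) - -(Real.pi / 2) := by
    have h1 : c * -p / (p * Real.sqrt (1 + (-p) ^ 2)) = -1 := by
      rw [show (-p : ℝ) ^ 2 = p ^ 2 by ring, ← hcdef]; field_simp
    have h2 : (-p) / p = -1 := by field_simp
    simp only [hFdef, h1, h2, Real.arcsin_neg_one]
  rw [hFp, hFmp]
  ring

theorem HP_pushforward_is_probability (d p : ℝ) (hd : 0 < d) (hp : 0 < p)
    (hp2 : p ^ 2 = (1 + 2 * d) / d ^ 2) :
    ∫ x in (-p)..p,
        (1 / (Real.pi * (Real.sqrt (1 + p ^ 2) - 1)))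
          * Real.sqrt (p ^ 2 - x ^ 2) / (1 + x ^ 2) = 1 := by
  have hc2 : (Real.sqrt (1 + p ^ 2)) ^ 2 = 1 + p ^ 2 := Real.sq_sqrt (by nlinarith)
  have hc1 : 1 < Real.sqrt (1 + p ^ 2) := by
    nlinarith [Real.sqrt_pos.mpr (show (0:ℝ) < 1 + p ^ 2 by nlinarith)]
  have hne : Real.pi * (Real.sqrt (1 + p ^ 2) - 1) ≠ 0 :=
    mul_ne_zero Real.pi_ne_zero (ne_of_gt (by linarith))
  simp_rw [mul_div_assoc]
  rw [intervalIntegral.integral_const_mul, HP_key p hp,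
    mul_comm (Real.sqrt (1 + p ^ 2) - 1) Real.pi, one_div, inv_mul_cancel₀ hne]
end

section
/- Let α be a p×p complex matrix with α·α† ≤ 1 (all singular values < 1), ρ^R = (1 - α·α†)^{1/2}, ρ^L = (1 - α†·α)^{1/2}, and let u be a p×p unitary matrix. Then -α + ρ^R·(1 - u·α†)^{-1}·u·ρ^L = (ρ^R)^{-1}·(u - α)·(1 - α†·u)^{-1}·ρ^L, whenever the inverses exist. -/
open Matrix
open scoped ComplexOrder

lemma psd_trace_nonneg {n : Type*} [Fintype n] [DecidableEq n]
    {M : Matrix n n ℂ} (hM : M.PosSemidef) : 0 ≤ M.trace := by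
  rw [Matrix.trace]
  apply Finset.sum_nonneg
  intro i _
  have := hM.dotProduct_mulVec_nonneg (Pi.single i 1)
  simpa [Matrix.mulVec, dotProduct, Pi.single_apply, Matrix.diag] using this

open scoped MatrixOrder in
lemma trace_mul_psd_nonneg {n : Type*} [Fintype n] [DecidableEq n]
    {X Y : Matrix n n ℂ} (hX : X.PosSemidef) (hY : Y.PosSemidef) :
    0 ≤ (X * Y).trace := by
  obtain ⟨B, hB⟩ := CStarAlgebra.nonneg_iff_eq_star_mul_self.mp hY.nonneg
  rw [Matrix.star_eq_conjTranspose] at hB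
  subst hB
  have h : (X * (Bᴴ * B)).trace = (B * X * Bᴴ).trace := by
    rw [← Matrix.mul_assoc, Matrix.trace_mul_comm, Matrix.mul_assoc]
  rw [h]
  exact psd_trace_nonneg (hX.mul_mul_conjTranspose_same B)

lemma intertwine_aux {n : Type*} [Fintype n] [DecidableEq n]
    {R L D : Matrix n n ℂ} (hR : R.PosSemidef) (hL : L.PosSemidef)
    (hswap : R * D = -(D * L)) (h3 : IsUnit R) : D = 0 := by
  have hpsd : (Dᴴ * R * D).PosSemidef := hR.conjTranspose_mul_mul_same D
  have ht1 : 0 ≤ (Dᴴ * R * D).trace := psd_trace_nonneg hpsd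
  have ht2 : (Dᴴ * R * D).trace = -((Dᴴ * D) * L).trace := by
    rw [Matrix.mul_assoc, hswap]
    simp [Matrix.mul_assoc]
  have ht3 : 0 ≤ ((Dᴴ * D) * L).trace :=
    trace_mul_psd_nonneg (Matrix.posSemidef_conjTranspose_mul_self D) hL
  have htr0 : (Dᴴ * R * D).trace = 0 := by
    have : (Dᴴ * R * D).trace ≤ 0 := by rw [ht2]; exact neg_nonpos_of_nonneg ht3
    exact le_antisymm this ht1
  have hdiag : ∀ i, (Dᴴ * R * D) i i = 0 := by
    intro i
    have hnn : ∀ j ∈ Finset.univ, (0:ℂ) ≤ (Dᴴ * R * D) j j := by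
      intro j _
      have := hpsd.dotProduct_mulVec_nonneg (Pi.single j 1)
      simpa [Matrix.mulVec, dotProduct, Pi.single_apply] using this
    exact (Finset.sum_eq_zero_iff_of_nonneg hnn).mp htr0 i (Finset.mem_univ i)
  have hcol : ∀ i, R *ᵥ (fun j => D j i) = 0 := by
    intro i
    apply (hR.dotProduct_mulVec_zero_iff _).mp
    have := hdiag i
    rw [← this]
    simp [Matrix.mul_apply, Matrix.mulVec, dotProduct, Finset.mul_sum, Finset.sum_mul,
      Matrix.conjTranspose_apply]
    rw [Finset.sum_comm]
    congr 1; ext j; congr 1; ext k; ring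
  have hRD : R * D = 0 := by
    ext j i
    have := congrFun (hcol i) j
    simpa [Matrix.mul_apply, Matrix.mulVec, dotProduct] using this
  have hdet := (Matrix.isUnit_iff_isUnit_det R).mp h3
  have hinv : R⁻¹ * (R * D) = D := by
    rw [← Matrix.mul_assoc, Matrix.nonsing_inv_mul R hdet, one_mul]
  rw [← hinv, hRD, Matrix.mul_zero]

theorem matrix_moebius_identity (p : ℕ) (α ρR ρL u : Matrix (Fin p) (Fin p) ℂ)
    (hpos : (1 - α * αᴴ).PosDef)
    (hρR : ρR.PosSemidef) (hρR2 : ρR * ρR = 1 - α * αᴴ)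
    (hρL : ρL.PosSemidef) (hρL2 : ρL * ρL = 1 - αᴴ * α)
    (hu : u ∈ Matrix.unitaryGroup (Fin p) ℂ)
    (h1 : IsUnit (1 - u * αᴴ)) (h2 : IsUnit (1 - αᴴ * u)) (h3 : IsUnit ρR) :
    -α + ρR * (1 - u * αᴴ)⁻¹ * u * ρL = ρR⁻¹ * (u - α) * (1 - αᴴ * u)⁻¹ * ρL := by
  have hdet1 := (Matrix.isUnit_iff_isUnit_det _).mp h1
  have hdet2 := (Matrix.isUnit_iff_isUnit_det _).mp h2
  have hdetR := (Matrix.isUnit_iff_isUnit_det _).mp h3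
  -- intertwining : ρR * α = α * ρL
  have h0 : ρR * (ρR * α) = α * (ρL * ρL) := by
    rw [← Matrix.mul_assoc, hρR2, hρL2]
    noncomm_ring
  have hswap : ρR * (ρR * α - α * ρL) = -((ρR * α - α * ρL) * ρL) := by
    rw [mul_sub, sub_mul]
    simp only [Matrix.mul_assoc]
    rw [h0]
    abel
  have hkey : ρR * α = α * ρL :=
    sub_eq_zero.mp (intertwine_aux hρR hρL hswap h3)
  -- commuting u through the inverses
  have hcomm : (1 - u * αᴴ)⁻¹ * u = u * (1 - αᴴ * u)⁻¹ := by
    have hs : (1 - u * αᴴ) * u = u * (1 - αᴴ * u) := by noncomm_ring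
    have := congrArg (fun M => (1 - u * αᴴ)⁻¹ * M * (1 - αᴴ * u)⁻¹) hs
    simp only [← Matrix.mul_assoc] at this
    rw [Matrix.nonsing_inv_mul _ hdet1, one_mul] at this
    rw [Matrix.mul_assoc ((1 - u * αᴴ)⁻¹ * u), Matrix.mul_nonsing_inv _ hdet2, mul_one] at this
    exact this.symm
  -- key rational identity
  have hfrac : (1 - α * αᴴ) * (u * (1 - αᴴ * u)⁻¹) = (u - α) * (1 - αᴴ * u)⁻¹ + α := by
    have hexp : (1 - α * αᴴ) * u = (u - α) + α * (1 - αᴴ * u) := by noncomm_ring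
    rw [← Matrix.mul_assoc, hexp, add_mul, Matrix.mul_assoc α,
      Matrix.mul_nonsing_inv _ hdet2, mul_one]
  -- cancel ρR on the left
  have cancel : ∀ X Y : Matrix (Fin p) (Fin p) ℂ, ρR * X = ρR * Y → X = Y := by
    intro X Y h
    have hX : ρR⁻¹ * (ρR * X) = X := by
      rw [← Matrix.mul_assoc, Matrix.nonsing_inv_mul _ hdetR, one_mul]
    have hY : ρR⁻¹ * (ρR * Y) = Y := by
      rw [← Matrix.mul_assoc, Matrix.nonsing_inv_mul _ hdetR, one_mul]
    rw [← hX, h, hY]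
  apply cancel
  have hRHS : ρR * (ρR⁻¹ * (u - α) * (1 - αᴴ * u)⁻¹ * ρL)
      = (u - α) * (1 - αᴴ * u)⁻¹ * ρL := by
    simp only [← Matrix.mul_assoc]
    rw [Matrix.mul_nonsing_inv _ hdetR, one_mul]
  rw [hRHS]
  calc ρR * (-α + ρR * (1 - u * αᴴ)⁻¹ * u * ρL)
      = -(ρR * α) + ρR * ρR * ((1 - u * αᴴ)⁻¹ * u) * ρL := by
        rw [mul_add, mul_neg]
        simp only [Matrix.mul_assoc]
    _ = -(α * ρL) + (1 - α * αᴴ) * (u * (1 - αᴴ * u)⁻¹) * ρL := by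
        rw [hkey, hρR2, hcomm]
    _ = -(α * ρL) + ((u - α) * (1 - αᴴ * u)⁻¹ + α) * ρL := by rw [hfrac]
    _ = (u - α) * (1 - αᴴ * u)⁻¹ * ρL := by noncomm_ring
end

section
/- For d ≥ 0 and p ≥ 1, the function H_{d,p}(γ) = -log det(1 - γγ†) - d·log det((1-γ)(1-γ)†) + p·H_d(0), defined on p×p complex matrices γ with γγ† < 1, is nonnegative and vanishes uniquely at γ = γ_d·1, where γ_d = -d/(1+d). -/
open Matrix
open scoped ComplexOrder

/-- The matrix rate function
`H_{d,p}(γ) = -log det(1-γγ†) - d·log det((1-γ)(1-γ)†) + p·H_d(0)`. -/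
noncomputable def Hdp (d : ℝ) (p : ℕ) (γ : Matrix (Fin p) (Fin p) ℂ) : ℝ :=
  -Real.log ((1 - γ * γᴴ).det.re)
    - d * Real.log (((1 - γ) * (1 - γ)ᴴ).det.re)
    + p * Hd0 d

lemma trace_re_eq_sum_eigs {n : Type*} [Fintype n] [DecidableEq n]
    {A : Matrix n n ℂ} (hA : A.IsHermitian) :
    A.trace.re = ∑ i, hA.eigenvalues i := by
  have h : A.trace = ((∑ i, hA.eigenvalues i : ℝ) : ℂ) := by
    conv_lhs => rw [hA.spectral_theorem, Unitary.conjStarAlgAut_apply]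
    rw [Matrix.trace_mul_cycle, Unitary.coe_star_mul_self, one_mul, Matrix.trace_diagonal]
    push_cast
    rfl
  rw [h, Complex.ofReal_re]

lemma det_re_eq_prod_eigs {n : Type*} [Fintype n] [DecidableEq n]
    {A : Matrix n n ℂ} (hA : A.IsHermitian) :
    A.det.re = ∏ i, hA.eigenvalues i := by
  rw [hA.det_eq_prod_eigenvalues]; norm_cast

/-- Concavity of `log det`, linearized at the scalar matrix `t • 1`. -/
lemma logdet_le {p : ℕ} {A : Matrix (Fin p) (Fin p) ℂ} (hA : A.PosDef)
    {t : ℝ} (ht : 0 < t) :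
    Real.log A.det.re ≤ p * Real.log t + (A.trace.re - p * t) / t := by
  have hpos : ∀ i, 0 < hA.1.eigenvalues i := hA.eigenvalues_pos
  rw [det_re_eq_prod_eigs hA.1, trace_re_eq_sum_eigs hA.1,
    Real.log_prod (fun i _ => (hpos i).ne')]
  have step : ∀ i : Fin p, Real.log (hA.1.eigenvalues i)
      ≤ Real.log t + (hA.1.eigenvalues i - t) / t := by
    intro i
    have h := Real.log_le_sub_one_of_pos (x := hA.1.eigenvalues i / t) (div_pos (hpos i) ht)
    rw [Real.log_div (hpos i).ne' ht.ne'] at h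
    have h2 : hA.1.eigenvalues i / t - 1 = (hA.1.eigenvalues i - t) / t := by
      field_simp
    linarith [h2 ▸ h]
  calc ∑ i, Real.log (hA.1.eigenvalues i)
      ≤ ∑ i : Fin p, (Real.log t + (hA.1.eigenvalues i - t) / t) :=
        Finset.sum_le_sum fun i _ => step i
    _ = p * Real.log t + ((∑ i, hA.1.eigenvalues i) - p * t) / t := by
        rw [Finset.sum_add_distrib, Finset.sum_const, Finset.card_univ, Fintype.card_fin,
          ← Finset.sum_div, Finset.sum_sub_distrib, Finset.sum_const, Finset.card_univ,
          Fintype.card_fin]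
        ring

/-- The key real algebraic identity behind the rate-function bound. -/
lemma key_id (d : ℝ) (hd : 0 ≤ d) (p : ℕ) (S T : ℝ) :
    (p:ℝ) * Hd0 d
      - ((p:ℝ) * Real.log ((1+2*d)/(1+d)^2)
          + (((p:ℝ) - S) - p * ((1+2*d)/(1+d)^2)) / ((1+2*d)/(1+d)^2))
      - d * ((p:ℝ) * Real.log (((1+2*d)/(1+d))^2)
          + (((p:ℝ) - 2*T + S) - p * (((1+2*d)/(1+d))^2)) / (((1+2*d)/(1+d))^2))
    = ((1+d)^3/(1+2*d)^2) * (S - 2*(-(d/(1+d)))*T + p*(-(d/(1+d)))^2) := by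
  have h1 : (0:ℝ) < 1 + d := by linarith
  have h2 : (0:ℝ) < 1 + 2*d := by linarith
  rw [Hd0, Real.log_div h2.ne' (by positivity), Real.log_pow, Real.log_pow,
    Real.log_div h2.ne' h1.ne']
  field_simp
  ring

lemma posDef_M {p : ℕ} {γ : Matrix (Fin p) (Fin p) ℂ} (hγ : (1 - γ * γᴴ).PosDef) :
    ((1 - γ) * (1 - γ)ᴴ).PosDef := by
  have hdet : (1 - γ)ᴴ.det ≠ 0 := by
    intro h
    obtain ⟨v, hv, hv0⟩ := (Matrix.exists_mulVec_eq_zero_iff).mpr h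
    have hγv : γᴴ *ᵥ v = v := by
      have he : (1 - γ)ᴴ = 1 - γᴴ := by simp
      rw [he, Matrix.sub_mulVec, Matrix.one_mulVec, sub_eq_zero] at hv0
      exact hv0.symm
    have h2 := hγ.dotProduct_mulVec_pos hv
    have he : (1 - γ * γᴴ) *ᵥ v = v - γ *ᵥ v := by
      rw [Matrix.sub_mulVec, Matrix.one_mulVec, ← Matrix.mulVec_mulVec, hγv]
    rw [he] at h2
    have key : star v ⬝ᵥ (γ *ᵥ v) = star v ⬝ᵥ v := by
      rw [Matrix.dotProduct_mulVec]
      have hs : star v ᵥ* γ = star v := by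
        have := congrArg star hγv
        rwa [Matrix.star_mulVec, Matrix.conjTranspose_conjTranspose] at this
      rw [hs]
    rw [dotProduct_sub, key, sub_self] at h2
    exact lt_irrefl _ h2
  refine Matrix.PosDef.of_dotProduct_mulVec_pos (Matrix.isHermitian_mul_conjTranspose_self _) fun x hx => ?_
  have hy : (1 - γ)ᴴ *ᵥ x ≠ 0 := by
    intro h
    exact hdet (Matrix.exists_mulVec_eq_zero_iff.mp ⟨x, hx, h⟩)
  have he : star x ⬝ᵥ (((1 - γ) * (1 - γ)ᴴ) *ᵥ x)
      = star ((1 - γ)ᴴ *ᵥ x) ⬝ᵥ ((1 - γ)ᴴ *ᵥ x) := by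
    rw [← Matrix.mulVec_mulVec, Matrix.dotProduct_mulVec, Matrix.star_mulVec,
      Matrix.conjTranspose_conjTranspose]
  rw [he]
  exact Matrix.dotProduct_star_self_pos_iff.mpr hy

lemma trace_mul_conj {p : ℕ} (γ : Matrix (Fin p) (Fin p) ℂ) :
    (γ * γᴴ).trace = ((∑ i, ∑ j, Complex.normSq (γ i j) : ℝ) : ℂ) := by
  simp [Matrix.trace, Matrix.diag, Matrix.mul_apply, Matrix.conjTranspose_apply,
    Complex.star_def, Complex.mul_conj]

lemma expand_M {p : ℕ} (γ : Matrix (Fin p) (Fin p) ℂ) :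
    (1 - γ) * (1 - γ)ᴴ = 1 - γᴴ - γ + γ * γᴴ := by
  rw [Matrix.conjTranspose_sub, Matrix.conjTranspose_one]
  noncomm_ring

lemma sum_normSq_sub {p : ℕ} (γ : Matrix (Fin p) (Fin p) ℂ) (c : ℝ) :
    ∑ i, ∑ j, Complex.normSq (γ i j - if i = j then (c:ℂ) else 0)
      = (∑ i, ∑ j, Complex.normSq (γ i j)) - 2*c*γ.trace.re + p*c^2 := by
  have per : ∀ i j : Fin p, Complex.normSq (γ i j - if i = j then (c:ℂ) else 0)
      = Complex.normSq (γ i j) + (if i = j then (c^2 - 2*c*(γ i j).re) else 0) := by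
    intro i j
    by_cases h : i = j
    · subst h
      simp only [if_pos trivial, eq_self_iff_true, if_true, Complex.normSq_apply,
        Complex.sub_re, Complex.sub_im, Complex.ofReal_re, Complex.ofReal_im]
      ring
    · simp [h]
  simp_rw [per, Finset.sum_add_distrib, Finset.sum_ite_eq]
  have ht : γ.trace.re = ∑ i, (γ i i).re := by
    rw [Matrix.trace, Complex.re_sum]
    rfl
  rw [ht]
  simp [Finset.sum_sub_distrib, Finset.mul_sum]
  ring

lemma trace_A_re {p : ℕ} (γ : Matrix (Fin p) (Fin p) ℂ) :
    (1 - γ * γᴴ).trace.re = (p:ℝ) - ∑ i, ∑ j, Complex.normSq (γ i j) := by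
  rw [Matrix.trace_sub, Matrix.trace_one, trace_mul_conj, Complex.sub_re]
  simp

lemma trace_M_re {p : ℕ} (γ : Matrix (Fin p) (Fin p) ℂ) :
    ((1 - γ) * (1 - γ)ᴴ).trace.re
      = (p:ℝ) - 2*γ.trace.re + ∑ i, ∑ j, Complex.normSq (γ i j) := by
  rw [expand_M, Matrix.trace_add, Matrix.trace_sub, Matrix.trace_sub, Matrix.trace_one,
    Matrix.trace_conjTranspose, trace_mul_conj, Complex.add_re, Complex.sub_re, Complex.sub_re]
  simp [Complex.star_def]
  ring

/-- The fundamental lower bound `c·Q ≤ H_{d,p}(γ)`. -/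
lemma Hdp_ge (d : ℝ) (hd : 0 ≤ d) (p : ℕ)
    (γ : Matrix (Fin p) (Fin p) ℂ) (hγ : (1 - γ * γᴴ).PosDef) :
    ((1+d)^3/(1+2*d)^2) *
      (∑ i, ∑ j, Complex.normSq (γ i j - if i = j then ((-(d/(1+d)):ℝ):ℂ) else 0))
      ≤ Hdp d p γ := by
  have h1 : (0:ℝ) < 1 + d := by linarith
  have h2 : (0:ℝ) < 1 + 2*d := by linarith
  have tApos : (0:ℝ) < (1+2*d)/(1+d)^2 := by positivity
  have tMpos : (0:ℝ) < ((1+2*d)/(1+d))^2 := by positivity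
  have hb1 := logdet_le hγ tApos
  have hb2 := logdet_le (posDef_M hγ) tMpos
  rw [trace_A_re] at hb1
  rw [trace_M_re] at hb2
  have hkey := key_id d hd p (∑ i, ∑ j, Complex.normSq (γ i j)) γ.trace.re
  rw [sum_normSq_sub γ (-(d/(1+d))), Hdp, ← hkey]
  have hb2' := mul_le_mul_of_nonneg_left hb2 hd
  linarith

/-- The value at the minimizer is `0`. -/
lemma Hdp_at_min (d : ℝ) (hd : 0 ≤ d) (p : ℕ) :
    Hdp d p (((-(d / (1 + d)) : ℝ) : ℂ) • (1 : Matrix (Fin p) (Fin p) ℂ)) = 0 := by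
  have h1 : (0:ℝ) < 1 + d := by linarith
  have h2 : (0:ℝ) < 1 + 2*d := by linarith
  set c : ℝ := -(d / (1 + d)) with hc
  have hsmul : ∀ (a b : ℂ), (a • (1:Matrix (Fin p) (Fin p) ℂ)) * (b • 1) = (a*b) • 1 := by
    intro a b
    rw [Matrix.smul_mul, Matrix.mul_smul, one_mul, smul_smul]
  have hH : ((c:ℂ) • (1:Matrix (Fin p) (Fin p) ℂ))ᴴ = (c:ℂ) • 1 := by
    rw [Matrix.conjTranspose_smul, Matrix.conjTranspose_one]
    simp [Complex.star_def, Complex.conj_ofReal]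
  have hsub : ∀ (a : ℂ), (1:Matrix (Fin p) (Fin p) ℂ) - a • 1 = (1 - a) • 1 := by
    intro a
    rw [sub_smul, one_smul]
  have hdetre : ∀ r : ℝ, (((r:ℂ)) • (1:Matrix (Fin p) (Fin p) ℂ)).det.re = r ^ p := by
    intro r
    rw [Matrix.det_smul, Matrix.det_one, mul_one]
    simp [← Complex.ofReal_pow]
  have hA0 : (1:Matrix (Fin p) (Fin p) ℂ) - ((c:ℂ) • 1) * ((c:ℂ) • 1)ᴴ
      = (((1 - c^2 : ℝ)):ℂ) • 1 := by
    rw [hH, hsmul, hsub]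
    push_cast
    ring_nf
  have hM0 : (1 - ((c:ℂ) • (1:Matrix (Fin p) (Fin p) ℂ))) * (1 - ((c:ℂ) • 1))ᴴ
      = ((((1 - c)^2 : ℝ)):ℂ) • 1 := by
    rw [Matrix.conjTranspose_sub, Matrix.conjTranspose_one, hH, hsub, hsmul]
    push_cast
    ring_nf
  rw [Hdp, hA0, hM0, hdetre, hdetre, Real.log_pow, Real.log_pow]
  -- use the key identity with S = p c², T = p c
  have hkey := key_id d hd p ((p:ℝ) * c^2) ((p:ℝ) * c)
  have e1 : (((p:ℝ) - (p:ℝ)*c^2) - (p:ℝ) * ((1+2*d)/(1+d)^2)) = 0 := by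
    rw [hc]; field_simp; ring
  have e2 : (((p:ℝ) - 2*((p:ℝ)*c) + (p:ℝ)*c^2) - (p:ℝ) * (((1+2*d)/(1+d))^2)) = 0 := by
    rw [hc]; field_simp; ring
  have e3 : 1 - c^2 = (1+2*d)/(1+d)^2 := by
    rw [hc]; field_simp; ring
  have e4 : (1-c)^2 = ((1+2*d)/(1+d))^2 := by
    rw [hc]; field_simp; ring
  have e5 : ((p:ℝ) * c^2 - 2*(-(d/(1+d)))*((p:ℝ)*c) + (p:ℝ)*(-(d/(1+d)))^2) = 0 := by
    rw [hc]; ring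
  rw [e1, e2, e5, zero_div, zero_div, mul_zero, add_zero, add_zero] at hkey
  rw [e3, e4]
  linarith

theorem Hdp_nonneg_vanishes (d : ℝ) (hd : 0 ≤ d) (p : ℕ) (hp : 1 ≤ p)
    (γ : Matrix (Fin p) (Fin p) ℂ) (hγ : (1 - γ * γᴴ).PosDef) :
    0 ≤ Hdp d p γ ∧
      (Hdp d p γ = 0 ↔ γ = ((-(d / (1 + d)) : ℝ) : ℂ) • (1 : Matrix (Fin p) (Fin p) ℂ)) := by
  have h1 : (0:ℝ) < 1 + d := by linarith
  have h2 : (0:ℝ) < 1 + 2*d := by linarith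
  have cpos : (0:ℝ) < (1+d)^3/(1+2*d)^2 := by positivity
  have hge := Hdp_ge d hd p γ hγ
  have hQnn : 0 ≤ ∑ i, ∑ j, Complex.normSq (γ i j - if i = j then ((-(d/(1+d)):ℝ):ℂ) else 0) :=
    Finset.sum_nonneg fun i _ => Finset.sum_nonneg fun j _ => Complex.normSq_nonneg _
  refine ⟨by nlinarith, ?_, ?_⟩
  · intro h0
    have hQ0 : ∑ i, ∑ j, Complex.normSq (γ i j - if i = j then ((-(d/(1+d)):ℝ):ℂ) else 0) = 0 := by
      nlinarith
    ext i j
    have hrow := (Finset.sum_eq_zero_iff_of_nonneg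
      (fun i _ => Finset.sum_nonneg fun j _ => Complex.normSq_nonneg _)).mp hQ0 i (Finset.mem_univ i)
    have hij := (Finset.sum_eq_zero_iff_of_nonneg
      (fun j _ => Complex.normSq_nonneg _)).mp hrow j (Finset.mem_univ j)
    have := sub_eq_zero.mp (Complex.normSq_eq_zero.mp hij)
    rw [this]
    by_cases h : i = j <;> simp [Matrix.one_apply, h]
  · rintro rfl
    exact Hdp_at_min d hd p
end
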